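/- arXiv:1210.3802 — 3 statements merged into one kernel-verified Lean document; each statement's English description precedes it below -/
import Mathlib

section
/- Let q(z) = (1/|a|²) Σ' (f_{i,j,m}(z)²/(d_{i,j} d_{j,m} d_{m,i})) v_{i,j}, where m ∈ {1,…,n} is fixed and Σ' is over pairs i < j with m ∉ {i,j}. Then for every z ∈ ℂ^n, the potential function of first kind P(z) = S^{(a)}(q(z), q(z)) satisfies P(z) = Σ_{1 ≤ i < j < k ≤ n} (a_i a_j a_k / |a|⁵) · f_{i,j,k}(z)⁴/(d_{i,j}² d_{j,k}² d_{k,i}²). -/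
open Finset

/-- `d_{i,j} = b_i^1 b_j^2 − b_i^2 b_j^1`. -/
def dd2 {n : ℕ} (b : Fin n → Fin 2 → ℂ) (i j : Fin n) : ℂ :=
  b i 0 * b j 1 - b i 1 * b j 0

/-- `f_{i,j,k}(z) = d_{j,k} z_i + d_{k,i} z_j + d_{i,j} z_k`. -/
def ff2 {n : ℕ} (b : Fin n → Fin 2 → ℂ) (z : Fin n → ℂ) (i j k : Fin n) : ℂ :=
  dd2 b j k * z i + dd2 b k i * z j + dd2 b i j * z k

/-- The basis vector `F_{i,j}` of `V` in the coordinate model: an element of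
`Fin n → Fin n → ℂ` whose `(i,j)` entry is `1` and `(j,i)` entry is `-1`.
This realizes the relations `F_{j,i} = -F_{i,j}` and `F_{i,i} = 0`. -/
def F2 (n : ℕ) (i j : Fin n) : Fin n → Fin n → ℂ :=
  fun k l => (if k = i ∧ l = j then 1 else 0) - (if k = j ∧ l = i then 1 else 0)

/-- The space `V` spanned by the `F_{i,j}`: antisymmetric coefficient arrays. -/
noncomputable def skewV2 (n : ℕ) : Submodule ℂ (Fin n → Fin n → ℂ) where
  carrier := {x | ∀ i j, x j i = -x i j}
  add_mem' := by
    intro x y hx hy i j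
    simp only [Pi.add_apply, hx i j, hy i j]
    ring
  zero_mem' := by
    intro i j
    simp
  smul_mem' := by
    intro c x hx i j
    simp only [Pi.smul_apply, smul_eq_mul, hx i j]
    ring

/-- The subspace `Sing V ⊆ V` of singular vectors:
`{∑_{i<j} c_{i,j} F_{i,j} : ∑_{j<i} a_j c_{j,i} − ∑_{j>i} a_j c_{i,j} = 0 for every i}`. -/
noncomputable def singV2 (n : ℕ) (a : Fin n → ℂ) : Submodule ℂ (Fin n → Fin n → ℂ) where
  carrier := {x | (∀ i j, x j i = -x i j) ∧ ∀ i,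
    (∑ j ∈ Finset.univ.filter (fun j => j < i), a j * x j i) -
      (∑ j ∈ Finset.univ.filter (fun j => i < j), a j * x i j) = 0}
  add_mem' := by
    intro x y hx hy
    refine ⟨fun i j => ?_, fun i => ?_⟩
    · simp only [Pi.add_apply, hx.1 i j, hy.1 i j]; ring
    · have h1 := hx.2 i
      have h2 := hy.2 i
      simp only [Pi.add_apply, mul_add, Finset.sum_add_distrib]
      linear_combination h1 + h2
  zero_mem' := by
    constructor
    · intro i j; simp
    · intro i; simp
  smul_mem' := by
    intro c x hx
    refine ⟨fun i j => ?_, fun i => ?_⟩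
    · simp only [Pi.smul_apply, smul_eq_mul, hx.1 i j]; ring
    · have h := hx.2 i
      simp only [Pi.smul_apply, smul_eq_mul]
      have e1 : ∑ j ∈ Finset.univ.filter (fun j => j < i), a j * (c * x j i) =
          c * ∑ j ∈ Finset.univ.filter (fun j => j < i), a j * x j i := by
        rw [Finset.mul_sum]; exact Finset.sum_congr rfl fun j _ => by ring
      have e2 : ∑ j ∈ Finset.univ.filter (fun j => i < j), a j * (c * x i j) =
          c * ∑ j ∈ Finset.univ.filter (fun j => i < j), a j * x i j := by
        rw [Finset.mul_sum]; exact Finset.sum_congr rfl fun j _ => by ring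
      rw [e1, e2]
      linear_combination c * h

/-- The vector `v_{i,j} = F_{i,j} − (a_j/|a|) ∑_k F_{i,k} − (a_i/|a|) ∑_ℓ F_{ℓ,j}`
(for `i ≠ j`), and `v_{i,i} = 0`. -/
noncomputable def vv2 {n : ℕ} (a : Fin n → ℂ) (i j : Fin n) : Fin n → Fin n → ℂ :=
  if i = j then 0 else
    F2 n i j - (a j / ∑ m, a m) • (∑ k, F2 n i k) - (a i / ∑ m, a m) • (∑ l, F2 n l j)

/-- The contravariant form `S^{(a)}` with `S^{(a)}(F_{i,j}, F_{i,j}) = a_i a_j` for `i < j`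
and distinct basis vectors orthogonal, written on coordinates. -/
noncomputable def S2 {n : ℕ} (a : Fin n → ℂ) (x y : Fin n → Fin n → ℂ) : ℂ :=
  ∑ i, ∑ j ∈ Finset.univ.filter (fun j => i < j), a i * a j * x i j * y i j

/-- The operator `L_{i,j,k}` sending each of `F_{i,j}, F_{j,k}, F_{k,i}` to
`a_k F_{i,j} + a_i F_{j,k} + a_j F_{k,i}` and killing `F_{ℓ,m}` with `{ℓ,m} ⊄ {i,j,k}`. -/
noncomputable def L2 {n : ℕ} (a : Fin n → ℂ) (i j k : Fin n) :
    (Fin n → Fin n → ℂ) →ₗ[ℂ] (Fin n → Fin n → ℂ) where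
  toFun x := (x i j + x j k + x k i) •
    (a k • F2 n i j + a i • F2 n j k + a j • F2 n k i)
  map_add' x y := by
    simp only [Pi.add_apply]
    rw [← add_smul]
    congr 1
    ring
  map_smul' c x := by
    simp only [Pi.smul_apply, smul_eq_mul, RingHom.id_apply]
    rw [smul_smul]
    congr 1
    ring

/-- The operator `K_i(z) = ∑_{{j,k} ⊆ {1,…,n}∖{i}} (d_{j,k}/f_{i,j,k}(z)) L_{i,j,k}`,
the sum over unordered pairs `{j,k}` realized by `j < k`. -/
noncomputable def K2 {n : ℕ} (a : Fin n → ℂ) (b : Fin n → Fin 2 → ℂ) (z : Fin n → ℂ)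
    (i : Fin n) : (Fin n → Fin n → ℂ) →ₗ[ℂ] (Fin n → Fin n → ℂ) :=
  ∑ j ∈ Finset.univ.erase i, ∑ k ∈ Finset.univ.filter (fun k => j < k ∧ k ≠ i),
    (dd2 b j k / ff2 b z i j k) • L2 a i j k

/-- The period map
`q(z) = (1/|a|²) ∑'_{i<j, m∉{i,j}} (f_{i,j,m}(z)²/(d_{i,j} d_{j,m} d_{m,i})) v_{i,j}`. -/
noncomputable def qmap2 {n : ℕ} (a : Fin n → ℂ) (b : Fin n → Fin 2 → ℂ) (m : Fin n)
    (z : Fin n → ℂ) : Fin n → Fin n → ℂ :=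
  ((∑ j, a j) ^ 2)⁻¹ • ∑ i, ∑ j ∈ Finset.univ.filter (fun j => i < j ∧ i ≠ m ∧ j ≠ m),
    (ff2 b z i j m ^ 2 / (dd2 b i j * dd2 b j m * dd2 b m i)) • vv2 a i j


section AuxiliaryLemmas

noncomputable def gg {n : ℕ} (b : Fin n → Fin 2 → ℂ) (z : Fin n → ℂ) (i j k : Fin n) : ℂ :=
  if i = j ∨ j = k ∨ i = k then 0
  else ff2 b z i j k ^ 2 / (dd2 b i j * dd2 b j k * dd2 b k i)

variable {n : ℕ} (b : Fin n → Fin 2 → ℂ) (z : Fin n → ℂ)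

lemma gg_swap12 (i j k : Fin n) : gg b z j i k = - gg b z i j k := by
  unfold gg
  by_cases h : i = j ∨ j = k ∨ i = k
  · rw [if_pos (by tauto), if_pos h, neg_zero]
  · rw [if_neg (by tauto), if_neg h]
    have hD : dd2 b j i * dd2 b i k * dd2 b k j
        = -(dd2 b i j * dd2 b j k * dd2 b k i) := by unfold dd2; ring
    have hf : ff2 b z j i k ^ 2 = ff2 b z i j k ^ 2 := by unfold ff2 dd2; ring
    rw [hD, hf, div_neg]

lemma gg_swap23 (i j k : Fin n) : gg b z i k j = - gg b z i j k := by
  unfold gg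
  by_cases h : i = j ∨ j = k ∨ i = k
  · rw [if_pos (by tauto), if_pos h, neg_zero]
  · rw [if_neg (by tauto), if_neg h]
    have hD : dd2 b i k * dd2 b k j * dd2 b j i
        = -(dd2 b i j * dd2 b j k * dd2 b k i) := by unfold dd2; ring
    have hf : ff2 b z i k j ^ 2 = ff2 b z i j k ^ 2 := by unfold ff2 dd2; ring
    rw [hD, hf, div_neg]

lemma gg_cyc (i j k : Fin n) : gg b z j k i = gg b z i j k := by
  have a1 := gg_swap12 b z k j i
  have a2 := gg_swap23 b z k i j
  have a3 := gg_swap12 b z i k j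
  have a4 := gg_swap23 b z i j k
  linear_combination a1 - a2 + a3 - a4

lemma gg_diag12 (i k : Fin n) : gg b z i i k = 0 := by unfold gg; simp

lemma gg_diag23 (i j : Fin n) : gg b z i j j = 0 := by unfold gg; simp

lemma gg_diag13 (i j : Fin n) : gg b z i j i = 0 := by unfold gg; simp

lemma gg_cocycle (hd : ∀ i j : Fin n, i ≠ j → dd2 b i j ≠ 0) (p q k l : Fin n) :
    gg b z q k l - gg b z p k l + gg b z p q l - gg b z p q k = 0 := by
  by_cases hpq : p = q
  · subst hpq; rw [gg_diag12, gg_diag12]; ring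
  by_cases hpk : p = k
  · subst hpk; rw [gg_diag12, gg_diag13, gg_swap12]; ring
  by_cases hpl : p = l
  · subst hpl; rw [gg_diag13, gg_diag13, gg_cyc]; ring
  by_cases hqk : q = k
  · subst hqk; rw [gg_diag12, gg_diag23]; ring
  by_cases hql : q = l
  · subst hql; rw [gg_diag13, gg_diag23, gg_swap23]; ring
  by_cases hkl : k = l
  · subst hkl; rw [gg_diag23 b z q, gg_diag23 b z p]; ring
  -- distinct case
  unfold gg
  rw [if_neg (by tauto), if_neg (by tauto), if_neg (by tauto), if_neg (by tauto)]
  have h1 := hd p q hpq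
  have h2 := hd p k hpk
  have h3 := hd p l hpl
  have h4 := hd q k hqk
  have h5 := hd q l hql
  have h6 := hd k l hkl
  have h3' := hd l p (Ne.symm hpl)
  have h2' := hd k p (Ne.symm hpk)
  have h6' := hd l q (Ne.symm hql)
  set P := dd2 b p q * dd2 b p k * dd2 b p l * dd2 b q k * dd2 b q l * dd2 b k l with hP
  have hPne : P ≠ 0 := by
    simp only [hP]
    exact mul_ne_zero (mul_ne_zero (mul_ne_zero (mul_ne_zero (mul_ne_zero h1 h2) h3) h4) h5) h6
  have e1 : ff2 b z q k l ^ 2 / (dd2 b q k * dd2 b k l * dd2 b l q)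
      = -(ff2 b z q k l ^ 2 * (dd2 b p q * dd2 b p k * dd2 b p l)) / P := by
    rw [div_eq_div_iff (mul_ne_zero (mul_ne_zero h4 h6) h6') hPne, hP]
    unfold dd2; ring
  have e2 : ff2 b z p k l ^ 2 / (dd2 b p k * dd2 b k l * dd2 b l p)
      = -(ff2 b z p k l ^ 2 * (dd2 b p q * dd2 b q k * dd2 b q l)) / P := by
    rw [div_eq_div_iff (mul_ne_zero (mul_ne_zero h2 h6) h3') hPne, hP]
    unfold dd2; ring
  have e3 : ff2 b z p q l ^ 2 / (dd2 b p q * dd2 b q l * dd2 b l p)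
      = -(ff2 b z p q l ^ 2 * (dd2 b p k * dd2 b q k * dd2 b k l)) / P := by
    rw [div_eq_div_iff (mul_ne_zero (mul_ne_zero h1 h5) h3') hPne, hP]
    unfold dd2; ring
  have e4 : ff2 b z p q k ^ 2 / (dd2 b p q * dd2 b q k * dd2 b k p)
      = -(ff2 b z p q k ^ 2 * (dd2 b p l * dd2 b q l * dd2 b k l)) / P := by
    rw [div_eq_div_iff (mul_ne_zero (mul_ne_zero h1 h4) h2') hPne, hP]
    unfold dd2; ring
  rw [e1, e2, e3, e4, div_sub_div_same, ← add_div, div_sub_div_same,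
      div_eq_zero_iff]
  left
  unfold ff2 dd2
  ring


end AuxiliaryLemmas

section SumLemmas

variable {n : ℕ}

-- antisymmetric double sum vanishes
lemma sum_antisym_zero (t : Fin n → Fin n → ℂ) (h : ∀ i j, t j i = - t i j) :
    ∑ i, ∑ j, t i j = 0 := by
  have h2 : ∑ i, ∑ j, t i j = - ∑ i, ∑ j, t i j := by
    nth_rewrite 1 [Finset.sum_comm]
    rw [← Finset.sum_neg_distrib]
    exact Finset.sum_congr rfl fun i _ => by
      rw [← Finset.sum_neg_distrib]
      exact Finset.sum_congr rfl fun j _ => h i j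
  have : (2:ℂ) * (∑ i, ∑ j, t i j) = 0 := by linear_combination h2
  simpa using this

-- pair lemma
lemma sum_pairs (h : Fin n → Fin n → ℂ) (hsym : ∀ i j, h j i = h i j)
    (hdiag : ∀ i, h i i = 0) :
    ∑ i, ∑ j, h i j = 2 * ∑ i, ∑ j ∈ Finset.univ.filter (fun j => i < j), h i j := by
  have key : ∀ i j : Fin n, h i j
      = (if i < j then h i j else 0) + (if j < i then h i j else 0) := by
    intro i j
    rcases lt_trichotomy i j with hij | rfl | hij
    · simp [hij, not_lt_of_gt hij]
    · simp [hdiag, lt_irrefl]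
    · simp [hij, not_lt_of_gt hij]
  calc ∑ i, ∑ j, h i j
      = ∑ i, ∑ j, ((if i < j then h i j else 0) + (if j < i then h i j else 0)) := by
        exact Finset.sum_congr rfl fun i _ => Finset.sum_congr rfl fun j _ => key i j
    _ = (∑ i, ∑ j, if i < j then h i j else 0)
        + ∑ i, ∑ j, (if j < i then h i j else 0) := by
        rw [← Finset.sum_add_distrib]
        exact Finset.sum_congr rfl fun i _ => Finset.sum_add_distrib
    _ = 2 * ∑ i, ∑ j ∈ Finset.univ.filter (fun j => i < j), h i j := by
        have e2 : (∑ i, ∑ j, if j < i then h i j else 0)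
            = ∑ i, ∑ j, if i < j then h j i else 0 := Finset.sum_comm
        rw [e2]
        have e3 : ∀ i, (∑ j, if i < j then h j i else 0) = ∑ j, if i < j then h i j else 0 :=
          fun i => Finset.sum_congr rfl fun j _ => by rw [hsym]
        simp_rw [e3, Finset.sum_filter]
        ring

-- rotation of a triple sum
lemma sum_rot (F : Fin n → Fin n → Fin n → ℂ) :
    ∑ i, ∑ j, ∑ k, F i j k = ∑ i, ∑ j, ∑ k, F k i j := by
  rw [Finset.sum_comm]
  exact Finset.sum_congr rfl fun _ _ => Finset.sum_comm

lemma sum_swap_inner (F : Fin n → Fin n → Fin n → ℂ) :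
    ∑ i, ∑ j, ∑ k, F i j k = ∑ i, ∑ j, ∑ k, F i k j :=
  Finset.sum_congr rfl fun _ _ => Finset.sum_comm

lemma sum_swap_outer (F : Fin n → Fin n → Fin n → ℂ) :
    ∑ i, ∑ j, ∑ k, F i j k = ∑ i, ∑ j, ∑ k, F j i k := Finset.sum_comm

lemma sum_triples (h : Fin n → Fin n → Fin n → ℂ)
    (h12 : ∀ i j k, h j i k = h i j k) (h23 : ∀ i j k, h i k j = h i j k)
    (d12 : ∀ i k, h i i k = 0) (d23 : ∀ i j, h i j j = 0) (d13 : ∀ i j, h i j i = 0) :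
    ∑ i, ∑ j, ∑ k, h i j k
      = 6 * ∑ i, ∑ j ∈ Finset.univ.filter (fun j => i < j),
          ∑ k ∈ Finset.univ.filter (fun k => j < k), h i j k := by
  have key : ∀ i j k : Fin n, h i j k
      = (if i < j ∧ j < k then h i j k else 0)
      + (if i < k ∧ k < j then h i j k else 0)
      + (if j < i ∧ i < k then h i j k else 0)
      + (if j < k ∧ k < i then h i j k else 0)
      + (if k < i ∧ i < j then h i j k else 0)
      + (if k < j ∧ j < i then h i j k else 0) := by
    intro i j k
    rcases lt_trichotomy i j with h1 | rfl | h1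
    · rcases lt_trichotomy j k with h2 | rfl | h2
      · have h3 : i < k := h1.trans h2
        simp [h1, h2, h3, lt_asymm h1, lt_asymm h2, lt_asymm h3]
      · simp [d23, lt_irrefl, h1, lt_asymm h1]
      · rcases lt_trichotomy i k with h3 | rfl | h3
        · simp [h1, h2, h3, lt_asymm h1, lt_asymm h2, lt_asymm h3]
        · simp [d13, lt_irrefl, h1, lt_asymm h1]
        · simp [h1, h2, h3, lt_asymm h1, lt_asymm h2, lt_asymm h3]
    · rcases lt_trichotomy i k with h2 | rfl | h2
      · simp [d12, lt_irrefl, h2, lt_asymm h2]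
      · simp [d12, lt_irrefl]
      · simp [d12, lt_irrefl, h2, lt_asymm h2]
    · rcases lt_trichotomy j k with h2 | rfl | h2
      · rcases lt_trichotomy i k with h3 | rfl | h3
        · simp [h1, h2, h3, lt_asymm h1, lt_asymm h2, lt_asymm h3]
        · simp [d13, lt_irrefl, h1, lt_asymm h1]
        · simp [h1, h2, h3, lt_asymm h1, lt_asymm h2, lt_asymm h3]
      · simp [d23, lt_irrefl, h1, lt_asymm h1]
      · have h3 : k < i := h2.trans h1
        simp [h1, h2, h3, lt_asymm h1, lt_asymm h2, lt_asymm h3]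
  -- sorted sum equals guarded full sum
  have sortedT : (∑ i, ∑ j ∈ Finset.univ.filter (fun j => i < j),
        ∑ k ∈ Finset.univ.filter (fun k => j < k), h i j k)
      = ∑ i, ∑ j, ∑ k, if i < j ∧ j < k then h i j k else 0 := by
    refine Finset.sum_congr rfl fun i _ => ?_
    rw [Finset.sum_filter]
    refine Finset.sum_congr rfl fun j _ => ?_
    by_cases hij : i < j
    · simp only [hij, if_true, true_and, Finset.sum_filter]
    · simp [hij]
  set T := ∑ i, ∑ j, ∑ k, if i < j ∧ j < k then h i j k else 0 with hT
  have e2 : (∑ i, ∑ j, ∑ k, if i < k ∧ k < j then h i j k else 0) = T := by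
    rw [sum_swap_inner (fun i j k => if i < k ∧ k < j then h i j k else 0)]
    exact Finset.sum_congr rfl fun i _ => Finset.sum_congr rfl fun j _ =>
      Finset.sum_congr rfl fun k _ => by rw [h23]
  have e3 : (∑ i, ∑ j, ∑ k, if j < i ∧ i < k then h i j k else 0) = T := by
    rw [sum_swap_outer (fun i j k => if j < i ∧ i < k then h i j k else 0)]
    exact Finset.sum_congr rfl fun i _ => Finset.sum_congr rfl fun j _ =>
      Finset.sum_congr rfl fun k _ => by rw [h12]
  have e4 : (∑ i, ∑ j, ∑ k, if j < k ∧ k < i then h i j k else 0) = T := by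
    rw [sum_rot (fun i j k => if j < k ∧ k < i then h i j k else 0)]
    exact Finset.sum_congr rfl fun i _ => Finset.sum_congr rfl fun j _ =>
      Finset.sum_congr rfl fun k _ => by rw [h12, h23]
  have e5 : (∑ i, ∑ j, ∑ k, if k < i ∧ i < j then h i j k else 0) = T := by
    rw [sum_rot (fun i j k => if k < i ∧ i < j then h i j k else 0),
        sum_rot (fun i j k => if j < k ∧ k < i then h k i j else 0)]
    exact Finset.sum_congr rfl fun i _ => Finset.sum_congr rfl fun j _ =>
      Finset.sum_congr rfl fun k _ => by rw [h23, h12]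
  have e6 : (∑ i, ∑ j, ∑ k, if k < j ∧ j < i then h i j k else 0) = T := by
    rw [sum_swap_inner (fun i j k => if k < j ∧ j < i then h i j k else 0),
        sum_rot (fun i j k => if j < k ∧ k < i then h i k j else 0)]
    exact Finset.sum_congr rfl fun i _ => Finset.sum_congr rfl fun j _ =>
      Finset.sum_congr rfl fun k _ => by rw [h12, h23, h12]
  calc ∑ i, ∑ j, ∑ k, h i j k
      = ∑ i, ∑ j, ∑ k, ((if i < j ∧ j < k then h i j k else 0)
        + (if i < k ∧ k < j then h i j k else 0)
        + (if j < i ∧ i < k then h i j k else 0)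
        + (if j < k ∧ k < i then h i j k else 0)
        + (if k < i ∧ i < j then h i j k else 0)
        + (if k < j ∧ j < i then h i j k else 0)) :=
        Finset.sum_congr rfl fun i _ => Finset.sum_congr rfl fun j _ =>
          Finset.sum_congr rfl fun k _ => key i j k
    _ = 6 * T := by
        simp only [Finset.sum_add_distrib]
        rw [e2, e3, e4, e5, e6]
        ring
  rw [sortedT]


end SumLemmas

section VVLemmas

variable {n : ℕ} (a : Fin n → ℂ)

lemma sumF2_right (i p q : Fin n) :
    (∑ k, F2 n i k) p q = (if p = i then (1:ℂ) else 0) - (if q = i then 1 else 0) := by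
  rw [Finset.sum_apply, Finset.sum_apply]
  unfold F2
  rw [Finset.sum_sub_distrib]
  congr 1
  · by_cases hp : p = i
    · simp [hp]
    · simp [hp]
  · by_cases hq : q = i
    · simp [hq]
    · simp [hq]

lemma sumF2_left (j p q : Fin n) :
    (∑ l, F2 n l j) p q = (if q = j then (1:ℂ) else 0) - (if p = j then 1 else 0) := by
  rw [Finset.sum_apply, Finset.sum_apply]
  unfold F2
  rw [Finset.sum_sub_distrib]
  congr 1
  · by_cases hq : q = j
    · simp [hq]
    · simp [hq]
  · by_cases hp : p = j
    · simp [hp]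
    · simp [hp]

lemma vv2_apply (i j p q : Fin n) (hij : i ≠ j) :
    vv2 a i j p q = ((if p = i ∧ q = j then 1 else 0) - (if p = j ∧ q = i then 1 else 0))
      - a j / (∑ m, a m) * ((if p = i then 1 else 0) - (if q = i then 1 else 0))
      - a i / (∑ m, a m) * ((if q = j then 1 else 0) - (if p = j then 1 else 0)) := by
  unfold vv2
  rw [if_neg hij]
  simp only [Pi.sub_apply, Pi.smul_apply, smul_eq_mul]
  rw [sumF2_right, sumF2_left]
  rfl

lemma vv2_antisymm (i j p q : Fin n) : vv2 a j i p q = - vv2 a i j p q := by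
  by_cases hij : i = j
  · subst hij; unfold vv2; simp
  · rw [vv2_apply a i j p q hij, vv2_apply a j i p q (Ne.symm hij)]
    ring


end VVLemmas

section QmapEntry

variable {n : ℕ}

lemma qmap2_apply (a : Fin n → ℂ) (b : Fin n → Fin 2 → ℂ)
    (hd : ∀ i j : Fin n, i ≠ j → dd2 b i j ≠ 0) (hA : (∑ j, a j) ≠ 0)
    (m : Fin n) (z : Fin n → ℂ) (p q : Fin n) :
    qmap2 a b m z p q = ((∑ j, a j) ^ 3)⁻¹ * ∑ k, a k * gg b z p q k := by
  set A := ∑ j, a j with hAdef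
  set W : Fin n → ℂ := fun x => ∑ j, a j * gg b z x j m with hW
  -- step 1: entries
  unfold qmap2
  simp only [Pi.smul_apply, smul_eq_mul, Finset.sum_apply]
  rw [← hAdef]
  -- step 2: coefficient is gg
  have step2 : ∀ i : Fin n, (∑ j ∈ Finset.univ.filter (fun j => i < j ∧ i ≠ m ∧ j ≠ m),
      ff2 b z i j m ^ 2 / (dd2 b i j * dd2 b j m * dd2 b m i) * vv2 a i j p q)
      = ∑ j ∈ Finset.univ.filter (fun j => i < j), gg b z i j m * vv2 a i j p q := by
    intro i
    rw [Finset.sum_congr rfl (fun j hj => ?_)]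
    · exact Finset.sum_subset (fun x hx => by
        simp only [Finset.mem_filter, Finset.mem_univ, true_and] at hx ⊢
        exact hx.1)
        (fun x hx hnx => by
          simp only [Finset.mem_filter, Finset.mem_univ, true_and] at hx hnx
          have : i = m ∨ x = m := by tauto
          rcases this with h | h
          · subst h; rw [gg_diag13, zero_mul]
          · subst h; rw [gg_diag23, zero_mul])
    · simp only [Finset.mem_filter, Finset.mem_univ, true_and] at hj
      obtain ⟨h1, h2, h3⟩ := hj
      unfold gg
      rw [if_neg (by push_neg; exact ⟨ne_of_lt h1, h3, h2⟩)]
  simp only [step2]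
  -- step 4: to full double sum
  have hsym : ∀ i j, gg b z j i m * vv2 a j i p q = gg b z i j m * vv2 a i j p q := by
    intro i j; rw [gg_swap12, vv2_antisymm]; ring
  have hdiag : ∀ i, gg b z i i m * vv2 a i i p q = 0 := by
    intro i; rw [gg_diag12, zero_mul]
  have hpairs : (∑ i, ∑ j, gg b z i j m * vv2 a i j p q)
      = 2 * ∑ i, ∑ j ∈ Finset.univ.filter (fun j => i < j), gg b z i j m * vv2 a i j p q :=
    sum_pairs (fun i j => gg b z i j m * vv2 a i j p q) hsym hdiag
  -- step 5: evaluate full double sum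
  have expand : ∀ i j, gg b z i j m * vv2 a i j p q
      = gg b z i j m * (if p = i ∧ q = j then 1 else 0)
      - gg b z i j m * (if p = j ∧ q = i then 1 else 0)
      - a j / A * gg b z i j m * (if p = i then 1 else 0)
      + a j / A * gg b z i j m * (if q = i then 1 else 0)
      - a i / A * gg b z i j m * (if q = j then 1 else 0)
      + a i / A * gg b z i j m * (if p = j then 1 else 0) := by
    intro i j
    by_cases hij : i = j
    · subst hij
      rw [gg_diag12]
      ring
    · rw [vv2_apply a i j p q hij, ← hAdef]
      ring
  have S1 : (∑ i, ∑ j, gg b z i j m * (if p = i ∧ q = j then 1 else 0)) = gg b z p q m := by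
    have e : ∀ i : Fin n, (∑ j, gg b z i j m * (if p = i ∧ q = j then 1 else 0))
        = if p = i then gg b z i q m else 0 := by
      intro i
      by_cases hp : p = i
      · simp [hp]
      · simp [hp]
    simp only [e]
    simp
  have S2 : (∑ i, ∑ j, gg b z i j m * (if p = j ∧ q = i then 1 else 0)) = - gg b z p q m := by
    have e : ∀ i : Fin n, (∑ j, gg b z i j m * (if p = j ∧ q = i then 1 else 0))
        = if q = i then gg b z i p m else 0 := by
      intro i
      by_cases hq : q = i
      · simp [hq]
      · simp [hq]
    simp only [e]
    simp [gg_swap12 b z p q m]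
  have S3 : (∑ i, ∑ j, a j / A * gg b z i j m * (if p = i then 1 else 0)) = W p / A := by
    have e : ∀ i : Fin n, (∑ j, a j / A * gg b z i j m * (if p = i then 1 else 0))
        = if p = i then ∑ j, a j / A * gg b z i j m else 0 := by
      intro i
      by_cases hp : p = i
      · simp [hp]
      · simp [hp]
    simp only [e]
    rw [Finset.sum_ite_eq univ p (fun i => ∑ j, a j / A * gg b z i j m)]
    simp only [Finset.mem_univ, if_true, hW]
    rw [Finset.sum_div]
    exact Finset.sum_congr rfl fun j _ => by ring
  have S4 : (∑ i, ∑ j, a j / A * gg b z i j m * (if q = i then 1 else 0)) = W q / A := by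
    have e : ∀ i : Fin n, (∑ j, a j / A * gg b z i j m * (if q = i then 1 else 0))
        = if q = i then ∑ j, a j / A * gg b z i j m else 0 := by
      intro i
      by_cases hq : q = i
      · simp [hq]
      · simp [hq]
    simp only [e]
    rw [Finset.sum_ite_eq univ q (fun i => ∑ j, a j / A * gg b z i j m)]
    simp only [Finset.mem_univ, if_true, hW]
    rw [Finset.sum_div]
    exact Finset.sum_congr rfl fun j _ => by ring
  have S5 : (∑ i, ∑ j, a i / A * gg b z i j m * (if q = j then 1 else 0)) = - (W q / A) := by
    have e : ∀ i : Fin n, (∑ j, a i / A * gg b z i j m * (if q = j then 1 else 0))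
        = a i / A * gg b z i q m := by
      intro i
      simp
    simp only [e, hW]
    rw [Finset.sum_div, ← Finset.sum_neg_distrib]
    exact Finset.sum_congr rfl fun i _ => by rw [gg_swap12 b z q i m]; ring
  have S6 : (∑ i, ∑ j, a i / A * gg b z i j m * (if p = j then 1 else 0)) = - (W p / A) := by
    have e : ∀ i : Fin n, (∑ j, a i / A * gg b z i j m * (if p = j then 1 else 0))
        = a i / A * gg b z i p m := by
      intro i
      simp
    simp only [e, hW]
    rw [Finset.sum_div, ← Finset.sum_neg_distrib]
    exact Finset.sum_congr rfl fun i _ => by rw [gg_swap12 b z p i m]; ring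
  have full : (∑ i, ∑ j, gg b z i j m * vv2 a i j p q)
      = 2 * gg b z p q m - 2 * (W p / A) + 2 * (W q / A) := by
    calc (∑ i, ∑ j, gg b z i j m * vv2 a i j p q)
        = (∑ i, ∑ j, gg b z i j m * (if p = i ∧ q = j then 1 else 0))
        - (∑ i, ∑ j, gg b z i j m * (if p = j ∧ q = i then 1 else 0))
        - (∑ i, ∑ j, a j / A * gg b z i j m * (if p = i then 1 else 0))
        + (∑ i, ∑ j, a j / A * gg b z i j m * (if q = i then 1 else 0))
        - (∑ i, ∑ j, a i / A * gg b z i j m * (if q = j then 1 else 0))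
        + (∑ i, ∑ j, a i / A * gg b z i j m * (if p = j then 1 else 0)) := by
          simp only [← Finset.sum_add_distrib, ← Finset.sum_sub_distrib]
          exact Finset.sum_congr rfl fun i _ => Finset.sum_congr rfl fun j _ => expand i j
      _ = 2 * gg b z p q m - 2 * (W p / A) + 2 * (W q / A) := by
          rw [S1, S2, S3, S4, S5, S6]; ring
  -- step 6: cocycle
  have step6 : (∑ k, a k * gg b z p q k) = A * gg b z p q m + W q - W p := by
    have e : ∀ k, a k * gg b z p q k
        = a k * gg b z q k m - a k * gg b z p k m + a k * gg b z p q m := by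
      intro k
      have := gg_cocycle b z hd p q k m
      linear_combination (-(a k)) * this
    rw [Finset.sum_congr rfl fun k _ => e k]
    simp only [Finset.sum_add_distrib, Finset.sum_sub_distrib]
    rw [hW]
    simp only [← Finset.sum_mul]
    rw [← hAdef]
    ring
  -- assemble
  have hsorted : (∑ i, ∑ j ∈ Finset.univ.filter (fun j => i < j),
      gg b z i j m * vv2 a i j p q)
      = gg b z p q m - (W p / A) + (W q / A) := by
    linear_combination (full - hpairs) / 2
  rw [hsorted, step6]
  field_simp
  ring


end QmapEntry

/-- The potential function of first kind `P(z) = S^{(a)}(q(z), q(z))`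
satisfies `P(z) = ∑_{i<j<k} (a_i a_j a_k/|a|⁵) f_{i,j,k}(z)⁴/(d_{i,j}² d_{j,k}² d_{k,i}²)`. -/
theorem stmt_15 (n : ℕ) (hn : 3 ≤ n) (b : Fin n → Fin 2 → ℂ)
    (hd : ∀ i j : Fin n, i ≠ j → dd2 b i j ≠ 0)
    (a : Fin n → ℂ) (ha : ∀ j, a j ≠ 0) (hA : (∑ j, a j) ≠ 0)
    (m : Fin n) (z : Fin n → ℂ) :
    S2 a (qmap2 a b m z) (qmap2 a b m z) =
      ∑ i, ∑ j ∈ Finset.univ.filter (fun j => i < j),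
        ∑ k ∈ Finset.univ.filter (fun k => j < k),
          (a i * a j * a k / (∑ m', a m') ^ 5) *
            (ff2 b z i j k ^ 4 / (dd2 b i j ^ 2 * dd2 b j k ^ 2 * dd2 b k i ^ 2)) := by
  set A := ∑ j, a j with hAdef
  set QQ : Fin n → Fin n → ℂ := fun p q => ∑ k, a k * gg b z p q k with hQQ
  have hQ : ∀ p q, QQ p q = ∑ k, a k * gg b z p q k := fun _ _ => rfl
  have QQanti : ∀ p q, QQ q p = - QQ p q := by
    intro p q
    rw [hQ, hQ, ← Finset.sum_neg_distrib]
    exact Finset.sum_congr rfl fun k _ => by rw [gg_swap12]; ring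
  have QQdiag : ∀ p, QQ p p = 0 := by
    intro p
    rw [hQ, Finset.sum_eq_zero]
    intro k _
    rw [gg_diag12, mul_zero]
  have hrow : ∀ x, (∑ y, a y * QQ x y) = 0 := by
    intro x
    have e : ∀ y, a y * QQ x y = ∑ l, a y * (a l * gg b z x y l) := by
      intro y
      rw [hQ, Finset.mul_sum]
    rw [Finset.sum_congr rfl fun y _ => e y]
    exact sum_antisym_zero (fun y l => a y * (a l * gg b z x y l))
      (fun y l => by
        show a l * (a y * gg b z x l y) = -(a y * (a l * gg b z x y l))
        rw [gg_swap23]; ring)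
  have key1 : ∀ p q k, A * gg b z p q k = QQ p q + QQ q k + QQ k p := by
    intro p q k
    have e : ∀ l, a l * gg b z p q l + a l * gg b z q k l + a l * gg b z k p l
        = a l * gg b z p q k := by
      intro l
      have h1 := gg_cocycle b z hd p q k l
      have h2 := gg_swap12 b z p k l
      linear_combination a l * h1 + a l * h2
    rw [hQ, hQ, hQ, ← Finset.sum_add_distrib, ← Finset.sum_add_distrib,
        Finset.sum_congr rfl fun l _ => e l, ← Finset.sum_mul, ← hAdef]
  -- square sums
  have sq1 : (∑ p, ∑ q, ∑ k, a p * a q * a k * QQ p q ^ 2)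
      = A * ∑ p, ∑ q, a p * a q * QQ p q ^ 2 := by
    rw [Finset.mul_sum]
    refine Finset.sum_congr rfl fun p _ => ?_
    rw [Finset.mul_sum]
    refine Finset.sum_congr rfl fun q _ => ?_
    rw [hAdef, Finset.sum_mul]
    exact Finset.sum_congr rfl fun k _ => by ring
  have sq2 : (∑ p, ∑ q, ∑ k, a p * a q * a k * QQ q k ^ 2)
      = A * ∑ p, ∑ q, a p * a q * QQ p q ^ 2 := by
    rw [sum_rot (fun p q k => a p * a q * a k * QQ q k ^ 2), ← sq1]
    exact Finset.sum_congr rfl fun p _ => Finset.sum_congr rfl fun q _ =>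
      Finset.sum_congr rfl fun k _ => by ring
  have sq3 : (∑ p, ∑ q, ∑ k, a p * a q * a k * QQ k p ^ 2)
      = A * ∑ p, ∑ q, a p * a q * QQ p q ^ 2 := by
    rw [sum_rot (fun p q k => a p * a q * a k * QQ k p ^ 2),
        sum_rot (fun p q k => a k * a p * a q * QQ q k ^ 2), ← sq1]
    exact Finset.sum_congr rfl fun p _ => Finset.sum_congr rfl fun q _ =>
      Finset.sum_congr rfl fun k _ => by ring
  -- cross sums vanish
  have cr1 : (∑ p, ∑ q, ∑ k, 2 * (a p * a q * a k) * (QQ p q * QQ q k)) = 0 := by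
    refine Finset.sum_eq_zero fun p _ => Finset.sum_eq_zero fun q _ => ?_
    have e : ∀ k, 2 * (a p * a q * a k) * (QQ p q * QQ q k)
        = (2 * a p * a q * QQ p q) * (a k * QQ q k) := fun k => by ring
    rw [Finset.sum_congr rfl fun k _ => e k, ← Finset.mul_sum, hrow q, mul_zero]
  have cr2 : (∑ p, ∑ q, ∑ k, 2 * (a p * a q * a k) * (QQ q k * QQ k p)) = 0 := by
    rw [sum_rot (fun p q k => 2 * (a p * a q * a k) * (QQ q k * QQ k p))]
    refine Finset.sum_eq_zero fun p _ => Finset.sum_eq_zero fun q _ => ?_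
    have e : ∀ k, 2 * (a k * a p * a q) * (QQ p q * QQ q k)
        = (2 * a p * a q * QQ p q) * (a k * QQ q k) := fun k => by ring
    rw [Finset.sum_congr rfl fun k _ => e k, ← Finset.mul_sum, hrow q, mul_zero]
  have cr3 : (∑ p, ∑ q, ∑ k, 2 * (a p * a q * a k) * (QQ k p * QQ p q)) = 0 := by
    rw [sum_rot (fun p q k => 2 * (a p * a q * a k) * (QQ k p * QQ p q)),
        sum_rot (fun p q k => 2 * (a k * a p * a q) * (QQ q k * QQ k p))]
    refine Finset.sum_eq_zero fun p _ => Finset.sum_eq_zero fun q _ => ?_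
    have e : ∀ k, 2 * (a q * a k * a p) * (QQ p q * QQ q k)
        = (2 * a p * a q * QQ p q) * (a k * QQ q k) := fun k => by ring
    rw [Finset.sum_congr rfl fun k _ => e k, ← Finset.mul_sum, hrow q, mul_zero]
  -- the big identity
  have big : A ^ 2 * (∑ p, ∑ q, ∑ k, a p * a q * a k * gg b z p q k ^ 2)
      = 3 * (A * ∑ p, ∑ q, a p * a q * QQ p q ^ 2) := by
    have point : ∀ p q k, A ^ 2 * (a p * a q * a k * gg b z p q k ^ 2)
        = a p * a q * a k * QQ p q ^ 2 + a p * a q * a k * QQ q k ^ 2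
        + a p * a q * a k * QQ k p ^ 2
        + 2 * (a p * a q * a k) * (QQ p q * QQ q k)
        + 2 * (a p * a q * a k) * (QQ q k * QQ k p)
        + 2 * (a p * a q * a k) * (QQ k p * QQ p q) := by
      intro p q k
      have h1 := key1 p q k
      linear_combination (a p * a q * a k
        * (A * gg b z p q k + (QQ p q + QQ q k + QQ k p))) * h1
    calc A ^ 2 * (∑ p, ∑ q, ∑ k, a p * a q * a k * gg b z p q k ^ 2)
        = ∑ p, ∑ q, ∑ k, A ^ 2 * (a p * a q * a k * gg b z p q k ^ 2) := by
          simp only [Finset.mul_sum]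
      _ = ∑ p, ∑ q, ∑ k, (a p * a q * a k * QQ p q ^ 2 + a p * a q * a k * QQ q k ^ 2
            + a p * a q * a k * QQ k p ^ 2
            + 2 * (a p * a q * a k) * (QQ p q * QQ q k)
            + 2 * (a p * a q * a k) * (QQ q k * QQ k p)
            + 2 * (a p * a q * a k) * (QQ k p * QQ p q)) := by
          exact Finset.sum_congr rfl fun p _ => Finset.sum_congr rfl fun q _ =>
            Finset.sum_congr rfl fun k _ => point p q k
      _ = 3 * (A * ∑ p, ∑ q, a p * a q * QQ p q ^ 2) := by
          simp only [Finset.sum_add_distrib]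
          rw [sq1, sq2, sq3, cr1, cr2, cr3]
          ring
  -- rewrite the left-hand side
  have lhs1 : S2 a (qmap2 a b m z) (qmap2 a b m z)
      = (A ^ 6)⁻¹ * ∑ i, ∑ j ∈ Finset.univ.filter (fun j => i < j),
          a i * a j * QQ i j ^ 2 := by
    unfold S2
    rw [Finset.mul_sum]
    refine Finset.sum_congr rfl fun i _ => ?_
    rw [Finset.mul_sum]
    refine Finset.sum_congr rfl fun j _ => ?_
    rw [qmap2_apply a b hd hA m z i j, ← hAdef, ← hQ i j]
    ring
  have hp2 : (∑ p, ∑ q, a p * a q * QQ p q ^ 2)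
      = 2 * ∑ i, ∑ j ∈ Finset.univ.filter (fun j => i < j), a i * a j * QQ i j ^ 2 :=
    sum_pairs (fun i j => a i * a j * QQ i j ^ 2)
      (fun i j => by
        show a j * a i * QQ j i ^ 2 = a i * a j * QQ i j ^ 2
        rw [QQanti i j]; ring)
      (fun i => by
        show a i * a i * QQ i i ^ 2 = 0
        rw [QQdiag]; ring)
  -- rewrite the right-hand side
  have hp3 : (∑ p, ∑ q, ∑ k, a p * a q * a k * gg b z p q k ^ 2)
      = 6 * ∑ i, ∑ j ∈ Finset.univ.filter (fun j => i < j),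
          ∑ k ∈ Finset.univ.filter (fun k => j < k), a i * a j * a k * gg b z i j k ^ 2 :=
    sum_triples (fun i j k => a i * a j * a k * gg b z i j k ^ 2)
      (fun i j k => by
        show a j * a i * a k * gg b z j i k ^ 2 = a i * a j * a k * gg b z i j k ^ 2
        rw [gg_swap12]; ring)
      (fun i j k => by
        show a i * a k * a j * gg b z i k j ^ 2 = a i * a j * a k * gg b z i j k ^ 2
        rw [gg_swap23]; ring)
      (fun i k => by
        show a i * a i * a k * gg b z i i k ^ 2 = 0
        rw [gg_diag12]; ring)
      (fun i j => by
        show a i * a j * a j * gg b z i j j ^ 2 = 0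
        rw [gg_diag23]; ring)
      (fun i j => by
        show a i * a j * a i * gg b z i j i ^ 2 = 0
        rw [gg_diag13]; ring)
  have rhs1 : (∑ i, ∑ j ∈ Finset.univ.filter (fun j => i < j),
        ∑ k ∈ Finset.univ.filter (fun k => j < k),
          (a i * a j * a k / A ^ 5) *
            (ff2 b z i j k ^ 4 / (dd2 b i j ^ 2 * dd2 b j k ^ 2 * dd2 b k i ^ 2)))
      = (A ^ 5)⁻¹ * ∑ i, ∑ j ∈ Finset.univ.filter (fun j => i < j),
          ∑ k ∈ Finset.univ.filter (fun k => j < k), a i * a j * a k * gg b z i j k ^ 2 := by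
    rw [Finset.mul_sum]
    refine Finset.sum_congr rfl fun i _ => ?_
    rw [Finset.mul_sum]
    refine Finset.sum_congr rfl fun j hj => ?_
    rw [Finset.mul_sum]
    refine Finset.sum_congr rfl fun k hk => ?_
    simp only [Finset.mem_filter, Finset.mem_univ, true_and] at hj hk
    have hij : i ≠ j := ne_of_lt hj
    have hjk : j ≠ k := ne_of_lt hk
    have hik : i ≠ k := ne_of_lt (hj.trans hk)
    unfold gg
    rw [if_neg (by push_neg; exact ⟨hij, hjk, hik⟩)]
    ring
  rw [lhs1, rhs1]
  have e2 : (∑ i, ∑ j ∈ Finset.univ.filter (fun j => i < j), a i * a j * QQ i j ^ 2)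
      = (∑ p, ∑ q, a p * a q * QQ p q ^ 2) / 2 := by linear_combination - hp2 / 2
  have e3 : (∑ i, ∑ j ∈ Finset.univ.filter (fun j => i < j),
        ∑ k ∈ Finset.univ.filter (fun k => j < k), a i * a j * a k * gg b z i j k ^ 2)
      = (∑ p, ∑ q, ∑ k, a p * a q * a k * gg b z p q k ^ 2) / 6 := by
    linear_combination - hp3 / 6
  rw [e2, e3]
  have hA6 : A ^ 6 ≠ 0 := pow_ne_zero _ hA
  have hA5 : A ^ 5 ≠ 0 := pow_ne_zero _ hA
  field_simp
  have hbig' : 3 * (∑ p, ∑ q, a p * a q * QQ p q ^ 2)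
      = A * (∑ p, ∑ q, ∑ k, a p * a q * a k * gg b z p q k ^ 2) :=
    mul_left_cancel₀ hA (by linear_combination (-1 : ℂ) * big)
  linear_combination 2 * hbig'
end

section
/- The contravariant form takes the following values on the vectors v_{i_1,…,i_k}: S^{(a)}(v_{i_1,…,i_k}, v_{j_1,…,j_k}) = 0 whenever |{i_1,…,i_k} ∩ {j_1,…,j_k}| < k−1; S^{(a)}(v_{i_1,…,i_{k−1},i_k}, v_{i_1,…,i_{k−1},i_{k+1}}) = −(a_{i_1} ⋯ a_{i_{k+1}})/|a| for pairwise distinct i_1,…,i_{k+1}; and S^{(a)}(v_{i_1,…,i_k}, v_{i_1,…,i_k}) = (Σ_{j ∉ {i_1,…,i_k}} a_j)(a_{i_1} ⋯ a_{i_k})/|a| for pairwise distinct i_1,…,i_k. -/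
open Finset

attribute [local instance] Classical.propDecidable

/-- The basis vector `F_{t(0),…,t(k-1)}` of `V` in the coordinate model: `V` is realized
inside the space of functions `(Fin k → Fin n) → ℂ`, and `F t` is the alternating
indicator of the tuple `t`.  This realizes the antisymmetry relations
`F_{i_{σ(1)},…,i_{σ(k)}} = sgn(σ) F_{i_1,…,i_k}` and `F = 0` on tuples with a repeated
index. -/
noncomputable def Fk {n k : ℕ} (t : Fin k → Fin n) : (Fin k → Fin n) → ℂ :=
  fun s => ∑ σ : Equiv.Perm (Fin k), ((Equiv.Perm.sign σ : ℤ) : ℂ) *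
    (if t = s ∘ σ then 1 else 0)

/-- The vector
`v_{i_1,…,i_k} = F_{i_1,…,i_k} − ∑_{m} (a_{i_m}/|a|) ∑_{j} F_{i_1,…,i_{m-1},j,i_{m+1},…,i_k}`
for pairwise distinct `i_1,…,i_k`, and `v = 0` on tuples with a repeated index. -/
noncomputable def vk {n k : ℕ} (a : Fin n → ℂ) (t : Fin k → Fin n) :
    (Fin k → Fin n) → ℂ :=
  if Function.Injective t then
    Fk t - ∑ m : Fin k, (a (t m) / ∑ j, a j) • ∑ j : Fin n, Fk (Function.update t m j)
  else 0

/-- The contravariant form `S^{(a)}`: distinct (increasing) basis vectors are orthogonal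
and `S^{(a)}(F_{i_1,…,i_k}, F_{i_1,…,i_k}) = a_{i_1} ⋯ a_{i_k}`. -/
noncomputable def Sk {n k : ℕ} (a : Fin n → ℂ) (x y : (Fin k → Fin n) → ℂ) : ℂ :=
  ∑ t ∈ Finset.univ.filter (fun t : Fin k → Fin n => StrictMono t),
    (∏ m, a (t m)) * x t * y t

section aux
variable {n k : ℕ}

lemma sgn_sq (π : Equiv.Perm (Fin k)) :
    ((Equiv.Perm.sign π : ℤ) : ℂ) * ((Equiv.Perm.sign π : ℤ) : ℂ) = 1 := by
  rcases Int.units_eq_one_or (Equiv.Perm.sign π) with h | h <;> simp [h]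

lemma Fk_comp_perm (w s : Fin k → Fin n) (π : Equiv.Perm (Fin k)) :
    Fk w (s ∘ π) = ((Equiv.Perm.sign π : ℤ) : ℂ) * Fk w s := by
  unfold Fk
  rw [Finset.mul_sum]
  refine Fintype.sum_equiv (Equiv.mulLeft π) _ _ (fun σ => ?_)
  have hcomp : s ∘ ⇑((Equiv.mulLeft π) σ) = (s ∘ ⇑π) ∘ ⇑σ := rfl
  rw [hcomp]
  have hsgn : ((Equiv.Perm.sign ((Equiv.mulLeft π) σ) : ℤ) : ℂ) =
      ((Equiv.Perm.sign π : ℤ) : ℂ) * ((Equiv.Perm.sign σ : ℤ) : ℂ) := by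
    have h0 : (Equiv.mulLeft π) σ = π * σ := rfl
    rw [h0, Equiv.Perm.sign_mul]
    push_cast; ring
  rw [hsgn]
  rcases Int.units_eq_one_or (Equiv.Perm.sign π) with h | h <;> simp [h] <;> ring

lemma Fk_noninj (w s : Fin k → Fin n) (hs : ¬ Function.Injective s) : Fk w s = 0 := by
  simp only [Function.Injective, not_forall] at hs
  obtain ⟨i, j, hij, hne⟩ := hs
  have hswap : s ∘ ⇑(Equiv.swap i j) = s := by
    funext x
    rcases eq_or_ne x i with rfl | hxi
    · simp [Equiv.swap_apply_left, hij]
    rcases eq_or_ne x j with rfl | hxj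
    · simp [Equiv.swap_apply_right, hij]
    · simp [Equiv.swap_apply_of_ne_of_ne hxi hxj]
  unfold Fk
  refine Finset.sum_involution (fun σ _ => Equiv.swap i j * σ) ?_ ?_ (fun σ _ => mem_univ _) ?_
  · intro σ _
    have h1 : s ∘ ⇑(Equiv.swap i j * σ) = s ∘ ⇑σ := by
      funext x; simp only [Function.comp_apply, Equiv.Perm.mul_apply]
      exact congrFun hswap (σ x)
    rw [h1]
    have h2 : ((Equiv.Perm.sign (Equiv.swap i j * σ) : ℤ) : ℂ) =
        -((Equiv.Perm.sign σ : ℤ) : ℂ) := by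
      simp [Equiv.Perm.sign_mul, Equiv.Perm.sign_swap hne]
    rw [h2]; ring
  · intro σ _ _ h
    have h1 : Equiv.swap i j * σ = 1 * σ := by rw [h, one_mul]
    exact hne (Equiv.swap_eq_one_iff.mp (mul_right_cancel h1))
  · intro σ _
    simp [← mul_assoc]

lemma vk_comp_perm (a : Fin n → ℂ) (u s : Fin k → Fin n) (π : Equiv.Perm (Fin k)) :
    vk a u (s ∘ π) = ((Equiv.Perm.sign π : ℤ) : ℂ) * vk a u s := by
  unfold vk
  split
  · simp only [Pi.sub_apply, Finset.sum_apply, Pi.smul_apply, smul_eq_mul, Fk_comp_perm,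
      ← Finset.mul_sum]
    rw [mul_sub, Finset.mul_sum]
    congr 1
    refine Finset.sum_congr rfl fun m _ => ?_
    ring
  · simp

lemma vk_noninj (a : Fin n → ℂ) (u s : Fin k → Fin n) (hs : ¬ Function.Injective s) :
    vk a u s = 0 := by
  unfold vk
  split
  · simp [Pi.sub_apply, Finset.sum_apply, Pi.smul_apply, Fk_noninj _ _ hs]
  · simp

lemma exists_unique_sm (w : Fin k → Fin n) (hw : Function.Injective w) :
    ∃! σ : Equiv.Perm (Fin k), StrictMono (w ∘ ⇑σ⁻¹) := by
  have hsm : StrictMono (w ∘ ⇑(Tuple.sort w)) :=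
    (Tuple.monotone_sort w).strictMono_of_injective (hw.comp (Equiv.injective _))
  refine ⟨(Tuple.sort w)⁻¹, by simpa using hsm, ?_⟩
  intro σ hσ
  have hr : Set.range (w ∘ ⇑σ⁻¹) = Set.range (w ∘ ⇑(Tuple.sort w)) := by
    rw [Set.range_comp, Set.range_comp]
    simp [Equiv.range_eq_univ]
  haveI : WellFoundedLT (Fin k) := inferInstance
  have heq : w ∘ ⇑σ⁻¹ = w ∘ ⇑(Tuple.sort w) := (StrictMono.range_inj hσ hsm).1 hr
  have : σ⁻¹ = Tuple.sort w := by
    ext x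
    exact congrArg Fin.val (hw (congrFun heq x))
  rw [← this, inv_inv]

lemma Sk_Fk (a : Fin n → ℂ) (w : Fin k → Fin n) (y : (Fin k → Fin n) → ℂ)
    (hy1 : ∀ (s : Fin k → Fin n) (π : Equiv.Perm (Fin k)), y (s ∘ ⇑π) = ((Equiv.Perm.sign π : ℤ) : ℂ) * y s)
    (hy0 : ∀ s, ¬ Function.Injective s → y s = 0) :
    Sk a (Fk w) y = (∏ m, a (w m)) * y w := by
  have key : ∀ (σ : Equiv.Perm (Fin k)) (s : Fin k → Fin n),
      (w = s ∘ ⇑σ) ↔ (s = w ∘ ⇑σ⁻¹) := by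
    intro σ s
    constructor
    · rintro rfl; funext x; simp
    · rintro rfl; funext x; simp
  unfold Sk Fk
  have step1 : ∀ s : Fin k → Fin n,
      (∏ m, a (s m)) * (∑ σ : Equiv.Perm (Fin k), ((Equiv.Perm.sign σ : ℤ) : ℂ) *
        (if w = s ∘ σ then 1 else 0)) * y s
      = ∑ σ : Equiv.Perm (Fin k),
          (if s = w ∘ ⇑σ⁻¹ then ((Equiv.Perm.sign σ : ℤ) : ℂ) * ((∏ m, a (s m)) * y s)
           else 0) := by
    intro s
    rw [Finset.mul_sum, Finset.sum_mul]
    refine Finset.sum_congr rfl fun σ _ => ?_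
    simp only [key]
    split <;> ring
  simp only [step1]
  rw [Finset.sum_comm]
  have step2 : ∀ σ : Equiv.Perm (Fin k),
      (∑ s ∈ Finset.univ.filter (fun t : Fin k → Fin n => StrictMono t),
        if s = w ∘ ⇑σ⁻¹ then ((Equiv.Perm.sign σ : ℤ) : ℂ) * ((∏ m, a (s m)) * y s) else 0)
      = if StrictMono (w ∘ ⇑σ⁻¹) then (∏ m, a (w m)) * y w else 0 := by
    intro σ
    rw [Finset.sum_ite_eq' (Finset.univ.filter (fun t : Fin k → Fin n => StrictMono t))
      (w ∘ ⇑σ⁻¹) (fun s => ((Equiv.Perm.sign σ : ℤ) : ℂ) * ((∏ m, a (s m)) * y s))]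
    simp only [Finset.mem_filter, Finset.mem_univ, true_and]
    split
    · have hprod : (∏ m, a ((w ∘ ⇑σ⁻¹) m)) = ∏ m, a (w m) := by
        exact Equiv.prod_comp σ⁻¹ (fun m => a (w m))
      have hy : y (w ∘ ⇑σ⁻¹) = ((Equiv.Perm.sign σ : ℤ) : ℂ) * y w := by
        rw [hy1 w σ⁻¹]
        simp [Equiv.Perm.sign_inv]
      rw [hprod, hy, ← mul_assoc, ← mul_assoc]
      rcases Int.units_eq_one_or (Equiv.Perm.sign σ) with h | h <;> simp [h]
    · rfl
  simp only [step2]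
  by_cases hw : Function.Injective w
  · obtain ⟨σ₀, hσ₀, huniq⟩ := exists_unique_sm w hw
    rw [← Finset.sum_filter]
    have : (Finset.univ.filter fun σ : Equiv.Perm (Fin k) => StrictMono (w ∘ ⇑σ⁻¹)) = {σ₀} := by
      ext σ
      simp only [Finset.mem_filter, Finset.mem_univ, true_and, Finset.mem_singleton]
      exact ⟨fun h => huniq σ h, fun h => h ▸ hσ₀⟩
    rw [this, Finset.sum_singleton]
  · have hz : ∀ σ : Equiv.Perm (Fin k), ¬ StrictMono (w ∘ ⇑σ⁻¹) := by
      intro σ hsm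
      exact hw (fun x y hxy => by
        have := hsm.injective (a₁ := σ x) (a₂ := σ y) (by simpa using hxy)
        simpa using this)
    simp [hz, hy0 w hw]

/-- `Ee t u' m σ` : the tuple `u'` matches `t ∘ σ` away from the slot hit by `m`. -/
def Ee (t u' : Fin k → Fin n) (m : Fin k) (σ : Equiv.Perm (Fin k)) : Prop :=
  ∀ l, σ l ≠ m → u' l = t (σ l)

noncomputable def Rr (a : Fin n → ℂ) (t u' : Fin k → Fin n) (m : Fin k) : ℂ :=
  ∑ σ : Equiv.Perm (Fin k), ((Equiv.Perm.sign σ : ℤ) : ℂ) *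
    (if Ee t u' m σ then a (u' (σ⁻¹ m)) else 0)

lemma update_comp_iff (t u' : Fin k → Fin n) (m : Fin k) (σ : Equiv.Perm (Fin k)) (j : Fin n) :
    u' = Function.update t m j ∘ ⇑σ ↔ (Ee t u' m σ ∧ j = u' (σ⁻¹ m)) := by
  constructor
  · rintro rfl
    refine ⟨fun l hl => ?_, ?_⟩
    · simp [Function.update_of_ne hl]
    · rw [Function.comp_apply, Equiv.Perm.inv_def, Equiv.apply_symm_apply, Function.update_self]
  · rintro ⟨hE, rfl⟩
    funext l
    rcases eq_or_ne (σ l) m with h | h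
    · have hl : l = σ⁻¹ m := by rw [← h]; simp
      subst hl
      rw [Function.comp_apply, h, Function.update_self]
    · simp [Function.comp_apply, Function.update_of_ne h, hE l h]

lemma prod_update_eq (a : Fin n → ℂ) (t : Fin k → Fin n) (m : Fin k) (j : Fin n) :
    (∏ l, a (Function.update t m j l)) = a j * ∏ l ∈ Finset.univ.erase m, a (t l) := by
  have h : (fun l => a (Function.update t m j l)) = Function.update (fun l => a (t l)) m (a j) := by
    funext l
    rcases eq_or_ne l m with rfl | h
    · simp
    · simp [Function.update_of_ne h]
  calc (∏ l, a (Function.update t m j l))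
      = ∏ l, Function.update (fun l => a (t l)) m (a j) l := by rw [← h]
    _ = a j * ∏ l ∈ Finset.univ.erase m, a (t l) := by
        rw [Finset.erase_eq]
        exact Finset.prod_update_of_mem (Finset.mem_univ m) ..

lemma Qeval (a : Fin n → ℂ) (t : Fin k → Fin n) (m : Fin k) (u' : Fin k → Fin n) :
    ∑ j : Fin n, (∏ l, a (Function.update t m j l)) * Fk u' (Function.update t m j)
      = (∏ l ∈ Finset.univ.erase m, a (t l)) * Rr a t u' m := by
  unfold Fk Rr
  simp only [Finset.mul_sum]
  rw [Finset.sum_comm]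
  refine Finset.sum_congr rfl fun σ _ => ?_
  simp only [update_comp_iff t u' m σ, prod_update_eq]
  by_cases hE : Ee t u' m σ
  · simp only [hE, true_and, if_pos]
    simp only [mul_ite, ite_mul, mul_one, mul_zero, zero_mul, one_mul]
    rw [Finset.sum_ite_eq' Finset.univ (u' (σ⁻¹ m))
      (fun j => (a j * ∏ l ∈ Finset.univ.erase m, a (t l)) * ((Equiv.Perm.sign σ : ℤ) : ℂ))]
    simp only [Finset.mem_univ, if_true]
    ring
  · simp [hE]




lemma Ee_update_self (t u : Fin k → Fin n) (m : Fin k) (σ : Equiv.Perm (Fin k)) (j' : Fin n) :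
    Ee t (Function.update u (σ⁻¹ m) j') m σ ↔ Ee t u m σ := by
  unfold Ee
  refine forall_congr' fun l => ?_
  refine imp_congr_right fun hl => ?_
  have hlm : l ≠ σ⁻¹ m := by
    intro h; subst h; exact hl (by simp)
  rw [Function.update_of_ne hlm]

lemma Ee_update_ne (t u : Fin k → Fin n) (m : Fin k) (σ : Equiv.Perm (Fin k))
    (m' : Fin k) (hm' : m' ≠ σ⁻¹ m) (j' : Fin n) :
    Ee t (Function.update u m' j') m σ ↔
      (j' = t (σ m') ∧ ∀ l, σ l ≠ m → l ≠ m' → u l = t (σ l)) := by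
  constructor
  · intro h
    have hσm' : σ m' ≠ m := fun hc => hm' (by rw [← hc]; simp)
    refine ⟨by simpa using h m' hσm', fun l hl hlm' => ?_⟩
    have h2 := h l hl
    rwa [Function.update_of_ne hlm'] at h2
  · rintro ⟨rfl, h⟩
    intro l hl
    rcases eq_or_ne l m' with rfl | hne
    · simp
    · rw [Function.update_of_ne hne]; exact h l hl hne

lemma Zzero (a : Fin n → ℂ) (t u : Fin k → Fin n) (m : Fin k) :
    ∑ p : Equiv.Perm (Fin k) × Fin k,
      ((Equiv.Perm.sign p.1 : ℤ) : ℂ) *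
        (if p.2 ≠ p.1⁻¹ m ∧ (∀ l, p.1 l ≠ m → l ≠ p.2 → u l = t (p.1 l)) then
          a (u p.2) * a (u (p.1⁻¹ m)) else 0) = 0 := by
  refine Finset.sum_involution
    (fun p _ => (p.1 * Equiv.swap (p.1⁻¹ m) p.2, p.1⁻¹ m)) ?_ ?_
    (fun p _ => Finset.mem_univ _) ?_
  · rintro ⟨σ, m'⟩ _
    simp only
    rcases eq_or_ne m' (σ⁻¹ m) with h | h
    · subst h
      rw [Equiv.swap_self]
      have h1 : σ * (Equiv.refl (Fin k)) = σ := by ext x; simp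
      rw [h1]
      simp
    · set σ' := σ * Equiv.swap (σ⁻¹ m) m' with hσ'
      have hinv : σ'⁻¹ m = m' := by
        rw [hσ', mul_inv_rev, Equiv.Perm.mul_apply, Equiv.swap_inv, Equiv.swap_apply_left]
      have hsgn : ((Equiv.Perm.sign σ' : ℤ) : ℂ) = -((Equiv.Perm.sign σ : ℤ) : ℂ) := by
        rw [hσ', Equiv.Perm.sign_mul, Equiv.Perm.sign_swap (Ne.symm h)]
        push_cast
        ring
      have hcond : ((σ⁻¹ m : Fin k) ≠ σ'⁻¹ m ∧ (∀ l, σ' l ≠ m → l ≠ σ⁻¹ m → u l = t (σ' l)))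
          ↔ (m' ≠ σ⁻¹ m ∧ (∀ l, σ l ≠ m → l ≠ m' → u l = t (σ l))) := by
        rw [hinv]
        constructor
        · rintro ⟨h1, h2⟩
          refine ⟨Ne.symm h1, fun l hl hlm' => ?_⟩
          have hlinv : l ≠ σ⁻¹ m := fun hc => hl (by rw [hc]; simp)
          have hσ'l : σ' l = σ l := by
            rw [hσ', Equiv.Perm.mul_apply, Equiv.swap_apply_of_ne_of_ne hlinv hlm']
          have := h2 l (by rw [hσ'l]; exact hl) hlinv
          rwa [hσ'l] at this
        · rintro ⟨h1, h2⟩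
          refine ⟨Ne.symm h1, fun l hl hlinv => ?_⟩
          have hlm' : l ≠ m' := by
            intro hc; subst hc
            exact hl (by rw [hσ', Equiv.Perm.mul_apply, Equiv.swap_apply_right]; simp)
          have hσ'l : σ' l = σ l := by
            rw [hσ', Equiv.Perm.mul_apply, Equiv.swap_apply_of_ne_of_ne hlinv hlm']
          rw [hσ'l]
          exact h2 l (by rw [← hσ'l]; exact hl) hlm'
      have hval : a (u (σ⁻¹ m)) * a (u (σ'⁻¹ m)) = a (u m') * a (u (σ⁻¹ m)) := by
        rw [hinv]; ring
      rw [hsgn]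
      by_cases hc : m' ≠ σ⁻¹ m ∧ (∀ l, σ l ≠ m → l ≠ m' → u l = t (σ l))
      · rw [if_pos hc, if_pos (hcond.mpr hc), hval]
        ring
      · rw [if_neg hc, if_neg (fun hx => hc (hcond.mp hx))]
        ring
  · rintro ⟨σ, m'⟩ _ hf hgp
    apply hf
    have h2 : m' = σ⁻¹ m := by
      have := congrArg Prod.snd hgp
      simpa using this.symm
    rw [if_neg (by simp [h2])]
    ring
  · rintro ⟨σ, m'⟩ _
    simp only
    have hinv : (σ * Equiv.swap (σ⁻¹ m) m')⁻¹ m = m' := by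
      rw [mul_inv_rev, Equiv.Perm.mul_apply, Equiv.swap_inv, Equiv.swap_apply_left]
    refine Prod.ext ?_ ?_
    · simp only [hinv]
      rw [mul_assoc, Equiv.swap_comm m' (σ⁻¹ m), Equiv.swap_mul_self, mul_one]
    · simpa using hinv





lemma sum_Rr_update (a : Fin n → ℂ) (t u : Fin k → Fin n) (m m' : Fin k) :
    ∑ j' : Fin n, Rr a t (Function.update u m' j') m
    = ∑ σ : Equiv.Perm (Fin k), ((Equiv.Perm.sign σ : ℤ) : ℂ) *
        (if m' = σ⁻¹ m then (if Ee t u m σ then (∑ j, a j) else 0)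
         else (if (∀ l, σ l ≠ m → l ≠ m' → u l = t (σ l)) then a (u (σ⁻¹ m)) else 0)) := by
  unfold Rr
  rw [Finset.sum_comm]
  refine Finset.sum_congr rfl fun σ _ => ?_
  rw [← Finset.mul_sum]
  congr 1
  rcases eq_or_ne m' (σ⁻¹ m) with h | h
  · subst h
    rw [if_pos rfl]
    simp only [Ee_update_self]
    by_cases hE : Ee t u m σ
    · simp [hE]
    · simp [hE]
  · rw [if_neg h]
    simp only [Ee_update_ne t u m σ m' h]
    have hval : ∀ j' : Fin n, Function.update u m' j' (σ⁻¹ m) = u (σ⁻¹ m) :=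
      fun j' => Function.update_of_ne (Ne.symm h) _ _
    by_cases hE : ∀ l, σ l ≠ m → l ≠ m' → u l = t (σ l)
    · rw [if_pos hE]
      simp only [hval]
      have hc : ∀ x : Fin n, (x = t (σ m') ∧ ∀ l, σ l ≠ m → l ≠ m' → u l = t (σ l))
          ↔ x = t (σ m') := fun x => and_iff_left hE
      simp only [hc]
      rw [Finset.sum_ite_eq' Finset.univ (t (σ m')) (fun _ => a (u (σ⁻¹ m)))]
      simp
    · simp [hE, hval]

lemma crux (a : Fin n → ℂ) (hA : (∑ j, a j) ≠ 0) (t u : Fin k → Fin n) (m : Fin k) :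
    ∑ j : Fin n, (∏ l, a (Function.update t m j l)) * vk a u (Function.update t m j) = 0 := by
  by_cases hu : Function.Injective u
  swap
  · simp [vk, hu]
  have expand : ∀ w, vk a u w = Fk u w
      - ∑ m' : Fin k, (a (u m') / ∑ j, a j) * ∑ j' : Fin n, Fk (Function.update u m' j') w := by
    intro w
    simp [vk, if_pos hu, Pi.sub_apply, Finset.sum_apply, Pi.smul_apply, smul_eq_mul]
  have step1 :
      ∑ j : Fin n, (∏ l, a (Function.update t m j l)) * vk a u (Function.update t m j)
      = (∑ j : Fin n, (∏ l, a (Function.update t m j l)) * Fk u (Function.update t m j))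
        - ∑ m' : Fin k, (a (u m') / ∑ j, a j) *
            ∑ j' : Fin n, ∑ j : Fin n, (∏ l, a (Function.update t m j l)) *
              Fk (Function.update u m' j') (Function.update t m j) := by
    have per_j : ∀ j : Fin n,
        (∏ l, a (Function.update t m j l)) * vk a u (Function.update t m j)
        = (∏ l, a (Function.update t m j l)) * Fk u (Function.update t m j)
          - ∑ m' : Fin k, (a (u m') / ∑ j, a j) *
              ((∏ l, a (Function.update t m j l)) *
                ∑ j' : Fin n, Fk (Function.update u m' j') (Function.update t m j)) := by
      intro j
      rw [expand, mul_sub, Finset.mul_sum]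
      congr 1
      refine Finset.sum_congr rfl fun m' _ => ?_
      ring
    simp only [per_j]
    rw [Finset.sum_sub_distrib]
    congr 1
    rw [Finset.sum_comm]
    refine Finset.sum_congr rfl fun m' _ => ?_
    rw [← Finset.mul_sum]
    congr 1
    rw [Finset.sum_comm]
    refine Finset.sum_congr rfl fun j _ => ?_
    rw [Finset.mul_sum]
  rw [step1]
  simp only [Qeval]
  set A := (∑ j, a j) with hAdef
  set C := (∏ l ∈ Finset.univ.erase m, a (t l)) with hC
  -- reduce to the Rr-identity
  have key : ∑ m' : Fin k, (a (u m') / A) * ∑ j' : Fin n, Rr a t (Function.update u m' j') m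
      = Rr a t u m := by
    simp only [sum_Rr_update]
    rw [← hAdef]
    simp only [Finset.mul_sum]
    rw [Finset.sum_comm]
    have per_σ : ∀ σ : Equiv.Perm (Fin k),
        ∑ m' : Fin k, (a (u m') / A) * (((Equiv.Perm.sign σ : ℤ) : ℂ) *
          (if m' = σ⁻¹ m then (if Ee t u m σ then A else 0)
           else (if (∀ l, σ l ≠ m → l ≠ m' → u l = t (σ l)) then a (u (σ⁻¹ m)) else 0)))
        = ((Equiv.Perm.sign σ : ℤ) : ℂ) * (if Ee t u m σ then a (u (σ⁻¹ m)) else 0)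
          + (1 / A) * ∑ m' : Fin k, ((Equiv.Perm.sign σ : ℤ) : ℂ) *
              (if m' ≠ σ⁻¹ m ∧ (∀ l, σ l ≠ m → l ≠ m' → u l = t (σ l)) then
                a (u m') * a (u (σ⁻¹ m)) else 0) := by
      intro σ
      have split : ∀ m' : Fin k,
          (a (u m') / A) * (((Equiv.Perm.sign σ : ℤ) : ℂ) *
            (if m' = σ⁻¹ m then (if Ee t u m σ then A else 0)
             else (if (∀ l, σ l ≠ m → l ≠ m' → u l = t (σ l)) then a (u (σ⁻¹ m)) else 0)))
          = (if m' = σ⁻¹ m then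
               (a (u m') / A) * (((Equiv.Perm.sign σ : ℤ) : ℂ) *
                 (if Ee t u m σ then A else 0)) else 0)
            + (1 / A) * (((Equiv.Perm.sign σ : ℤ) : ℂ) *
                (if m' ≠ σ⁻¹ m ∧ (∀ l, σ l ≠ m → l ≠ m' → u l = t (σ l)) then
                  a (u m') * a (u (σ⁻¹ m)) else 0)) := by
        intro m'
        rcases eq_or_ne m' (σ⁻¹ m) with h | h
        · simp only [h, if_pos rfl, ne_eq, not_true_eq_false, false_and, if_false, if_true]
          ring
        · simp only [if_neg h, ne_eq, h, not_false_eq_true, true_and]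
          by_cases hE : ∀ l, σ l ≠ m → l ≠ m' → u l = t (σ l)
          · rw [if_pos hE, if_pos hE]
            rw [if_neg not_false, if_neg not_false, zero_add]
            ring
          · simp only [hE, if_false]
            ring
      simp only [split]
      rw [Finset.sum_add_distrib]
      congr 1
      · rw [Finset.sum_ite_eq' Finset.univ (σ⁻¹ m)
          (fun m' => (a (u m') / A) * (((Equiv.Perm.sign σ : ℤ) : ℂ) *
            (if Ee t u m σ then A else 0)))]
        simp only [Finset.mem_univ, if_true]
        by_cases hE : Ee t u m σ
        · rw [if_pos hE, if_pos hE]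
          field_simp
        · rw [if_neg hE, if_neg hE]
          ring
      · rw [← Finset.mul_sum]
    simp only [per_σ]
    rw [Finset.sum_add_distrib]
    have hz : ∑ σ : Equiv.Perm (Fin k), (1 / A) * ∑ m' : Fin k,
        ((Equiv.Perm.sign σ : ℤ) : ℂ) *
          (if m' ≠ σ⁻¹ m ∧ (∀ l, σ l ≠ m → l ≠ m' → u l = t (σ l)) then
            a (u m') * a (u (σ⁻¹ m)) else 0) = 0 := by
      rw [← Finset.mul_sum]
      have := Zzero a t u m
      rw [Fintype.sum_prod_type] at this
      rw [this]
      ring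
    rw [hz, add_zero]
    rfl
  rw [show ∑ m' : Fin k, (a (u m') / A) * ∑ j' : Fin n, (C * Rr a t (Function.update u m' j') m)
      = C * ∑ m' : Fin k, (a (u m') / A) * ∑ j' : Fin n, Rr a t (Function.update u m' j') m from by
    rw [Finset.mul_sum]
    refine Finset.sum_congr rfl fun m' _ => ?_
    rw [← Finset.mul_sum]
    ring]
  rw [key]
  ring

/-- The main reduction: `S(v_t, v_u) = (∏ a(t)) ⋅ v_u(t)`. -/
lemma Sk_vk (a : Fin n → ℂ) (hA : (∑ j, a j) ≠ 0) (t u : Fin k → Fin n)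
    (ht : Function.Injective t) :
    Sk a (vk a t) (vk a u) = (∏ l, a (t l)) * vk a u t := by
  have hy1 := vk_comp_perm a u
  have hy0 := vk_noninj a u
  have hexp : Sk a (vk a t) (vk a u)
      = Sk a (Fk t) (vk a u)
        - ∑ m : Fin k, (a (t m) / ∑ j, a j) *
            ∑ j : Fin n, Sk a (Fk (Function.update t m j)) (vk a u) := by
    unfold Sk
    have expand : ∀ s, vk a t s = Fk t s
        - ∑ m : Fin k, (a (t m) / ∑ j, a j) * ∑ j : Fin n, Fk (Function.update t m j) s := by
      intro s
      simp [vk, if_pos ht, Pi.sub_apply, Finset.sum_apply, Pi.smul_apply, smul_eq_mul]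
    have per_s : ∀ s : Fin k → Fin n,
        (∏ l, a (s l)) * vk a t s * vk a u s
        = (∏ l, a (s l)) * Fk t s * vk a u s
          - ∑ m : Fin k, (a (t m) / ∑ j, a j) *
              ∑ j : Fin n, (∏ l, a (s l)) * Fk (Function.update t m j) s * vk a u s := by
      intro s
      rw [expand s, mul_sub, sub_mul]
      congr 1
      rw [Finset.mul_sum, Finset.sum_mul]
      refine Finset.sum_congr rfl fun m _ => ?_
      simp only [Finset.mul_sum, Finset.sum_mul]
      exact Finset.sum_congr rfl fun j _ => by ring
    calc ∑ s ∈ Finset.univ.filter (fun s : Fin k → Fin n => StrictMono s),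
          (∏ l, a (s l)) * vk a t s * vk a u s
        = ∑ s ∈ Finset.univ.filter (fun s : Fin k → Fin n => StrictMono s),
            ((∏ l, a (s l)) * Fk t s * vk a u s
              - ∑ m : Fin k, (a (t m) / ∑ j, a j) *
                  ∑ j : Fin n, (∏ l, a (s l)) * Fk (Function.update t m j) s * vk a u s) :=
          Finset.sum_congr rfl fun s _ => per_s s
      _ = (∑ s ∈ Finset.univ.filter (fun s : Fin k → Fin n => StrictMono s),
            (∏ l, a (s l)) * Fk t s * vk a u s)
          - ∑ s ∈ Finset.univ.filter (fun s : Fin k → Fin n => StrictMono s),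
              ∑ m : Fin k, (a (t m) / ∑ j, a j) *
                ∑ j : Fin n, (∏ l, a (s l)) * Fk (Function.update t m j) s * vk a u s :=
          Finset.sum_sub_distrib _ _
      _ = _ := by
          congr 1
          rw [Finset.sum_comm]
          refine Finset.sum_congr rfl fun m _ => ?_
          rw [← Finset.mul_sum]
          congr 1
          rw [Finset.sum_comm]
  rw [hexp, Sk_Fk a t _ hy1 hy0]
  have hz : ∀ m : Fin k,
      ∑ j : Fin n, Sk a (Fk (Function.update t m j)) (vk a u) = 0 := by
    intro m
    have : ∀ j : Fin n, Sk a (Fk (Function.update t m j)) (vk a u)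
        = (∏ l, a (Function.update t m j l)) * vk a u (Function.update t m j) :=
      fun j => Sk_Fk a _ _ hy1 hy0
    simp only [this]
    exact crux a hA t u m
  simp [hz]

lemma Fk_eq_of_forall_ne (t u : Fin k → Fin n)
    (h : ∀ σ : Equiv.Perm (Fin k), u ≠ t ∘ ⇑σ) : Fk u t = 0 := by
  unfold Fk
  refine Finset.sum_eq_zero fun σ _ => ?_
  rw [if_neg (h σ)]
  ring

lemma update_eq_comp_iff (t : Fin k → Fin n) (ht : Function.Injective t) (m : Fin k)
    (j : Fin n) (σ : Equiv.Perm (Fin k)) :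
    Function.update t m j = t ∘ ⇑σ ↔ (σ = 1 ∧ j = t m) := by
  constructor
  · intro h
    have hfix : ∀ l, l ≠ m → σ l = l := by
      intro l hl
      have := congrFun h l
      rw [Function.update_of_ne hl] at this
      exact (ht this.symm)
    have hσm : σ m = m := by
      by_contra hc
      have h1 : σ (σ m) = σ m := hfix (σ m) hc
      exact hc (σ.injective h1)
    have hσ1 : σ = 1 := by
      ext l
      rcases eq_or_ne l m with rfl | hl
      · simp [hσm]
      · simp [hfix l hl]
    subst hσ1
    have := congrFun h m
    simpa using this
  · rintro ⟨rfl, rfl⟩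
    funext l
    rcases eq_or_ne l m with rfl | hl
    · simp
    · simp [Function.update_of_ne hl]

lemma Fk_self (t : Fin k → Fin n) (ht : Function.Injective t) : Fk t t = 1 := by
  have h : ∀ σ : Equiv.Perm (Fin k), (t = t ∘ ⇑σ) ↔ σ = 1 := by
    intro σ
    constructor
    · intro h
      ext l
      have := congrFun h l
      have h2 : σ l = l := (ht this.symm)
      simp [h2]
    · rintro rfl; rfl
  unfold Fk
  rw [Finset.sum_eq_single 1]
  · simp
  · intro σ _ hσ
    rw [if_neg (fun hc => hσ ((h σ).mp hc))]
    ring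
  · simp

lemma sum_Fk_update_self (t : Fin k → Fin n) (ht : Function.Injective t) (m : Fin k) :
    ∑ j : Fin n, Fk (Function.update t m j) t = 1 := by
  unfold Fk
  rw [Finset.sum_comm]
  rw [Finset.sum_eq_single 1]
  · simp only [update_eq_comp_iff t ht m _ 1, true_and, Equiv.Perm.sign_one]
    rw [Finset.sum_eq_single (t m)] <;> simp
  · intro σ _ hσ
    refine Finset.sum_eq_zero fun j _ => ?_
    rw [if_neg (fun hc => hσ ((update_eq_comp_iff t ht m j σ).mp hc).1)]
    ring
  · simp

lemma vk_self (a : Fin n → ℂ) (t : Fin k → Fin n) (ht : Function.Injective t) :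
    vk a t t = 1 - ∑ m : Fin k, (a (t m) / ∑ j, a j) := by
  rw [vk, if_pos ht]
  simp only [Pi.sub_apply, Finset.sum_apply, Pi.smul_apply, smul_eq_mul]
  rw [Fk_self t ht]
  congr 1
  refine Finset.sum_congr rfl fun m _ => ?_
  rw [sum_Fk_update_self t ht m, mul_one]

lemma update_injective (t : Fin k → Fin n) (ht : Function.Injective t) (m : Fin k)
    (q : Fin n) (hq : q ∉ Set.range t) : Function.Injective (Function.update t m q) := by
  intro x y hxy
  by_cases hx : x = m <;> by_cases hy : y = m
  · rw [hx, hy]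
  · subst hx
    rw [Function.update_self, Function.update_of_ne hy] at hxy
    exact absurd ⟨y, hxy.symm⟩ hq
  · subst hy
    rw [Function.update_self, Function.update_of_ne hx] at hxy
    exact absurd ⟨x, hxy⟩ hq
  · rw [Function.update_of_ne hx, Function.update_of_ne hy] at hxy
    exact ht hxy

lemma vk_update_at (a : Fin n → ℂ) (t : Fin k → Fin n) (ht : Function.Injective t)
    (m : Fin k) (q : Fin n) (hq : q ∉ Set.range t) :
    vk a (Function.update t m q) t = -(a q / ∑ j, a j) := by
  have hu : Function.Injective (Function.update t m q) := update_injective t ht m q hq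
  rw [vk, if_pos hu]
  simp only [Pi.sub_apply, Finset.sum_apply, Pi.smul_apply, smul_eq_mul]
  have h0 : Fk (Function.update t m q) t = 0 := by
    refine Fk_eq_of_forall_ne _ _ fun σ hc => ?_
    have := congrFun hc m
    rw [Function.update_self] at this
    exact hq ⟨σ m, this.symm⟩
  rw [h0]
  rw [Finset.sum_eq_single m]
  · rw [Function.update_self]
    have hupd : ∀ j : Fin n, Function.update (Function.update t m q) m j
        = Function.update t m j := fun j => Function.update_idem ..
    simp only [hupd]
    rw [sum_Fk_update_self t ht m, mul_one]
    ring
  · intro m' _ hm'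
    have hz0 : ∑ j' : Fin n, Fk (Function.update (Function.update t m q) m' j') t = 0 := by
      refine Finset.sum_eq_zero fun j' _ => ?_
      refine Fk_eq_of_forall_ne _ _ fun σ hc => ?_
      have := congrFun hc m
      rw [Function.update_of_ne (Ne.symm hm'), Function.update_self] at this
      exact hq ⟨σ m, this.symm⟩
    rw [hz0, mul_zero]
  · simp

lemma vk_far (a : Fin n → ℂ) (t u : Fin k → Fin n) (ht : Function.Injective t)
    (hu : Function.Injective u)
    (hcard : ((Finset.univ.image t) ∩ (Finset.univ.image u)).card < k - 1) :
    vk a u t = 0 := by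
  rw [vk, if_pos hu]
  simp only [Pi.sub_apply, Finset.sum_apply, Pi.smul_apply, smul_eq_mul]
  have himg : ∀ w : Fin k → Fin n, (∀ σ : Equiv.Perm (Fin k), w ≠ t ∘ ⇑σ) ∨
      (Finset.univ.image w = Finset.univ.image t) := by
    intro w
    by_cases h : ∃ σ : Equiv.Perm (Fin k), w = t ∘ ⇑σ
    · obtain ⟨σ, rfl⟩ := h
      right
      ext x
      simp only [Finset.mem_image, Finset.mem_univ, true_and, Function.comp_apply]
      constructor
      · rintro ⟨l, rfl⟩; exact ⟨σ l, rfl⟩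
      · rintro ⟨l, rfl⟩; exact ⟨σ⁻¹ l, by simp⟩
    · left; intro σ hσ; exact h ⟨σ, hσ⟩
  have h0 : Fk u t = 0 := by
    refine Fk_eq_of_forall_ne _ _ fun σ hc => ?_
    subst hc
    have himgu : Finset.univ.image (t ∘ ⇑σ) = Finset.univ.image t := by
      ext x
      simp only [Finset.mem_image, Finset.mem_univ, true_and, Function.comp_apply]
      constructor
      · rintro ⟨l, rfl⟩; exact ⟨σ l, rfl⟩
      · rintro ⟨l, rfl⟩; exact ⟨σ⁻¹ l, by simp⟩
    rw [himgu, Finset.inter_self] at hcard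
    rw [Finset.card_image_of_injective _ ht, Finset.card_fin] at hcard
    omega
  rw [h0]
  have hz1 : ∑ m' : Fin k, (a (u m') / ∑ j, a j) *
      ∑ j' : Fin n, Fk (Function.update u m' j') t = 0 := by
    refine Finset.sum_eq_zero fun m' _ => ?_
    have hz0 : ∑ j' : Fin n, Fk (Function.update u m' j') t = 0 := by
      refine Finset.sum_eq_zero fun j' _ => ?_
      refine Fk_eq_of_forall_ne _ _ fun σ hc => ?_
      have hsub : (Finset.univ.erase m').image u ⊆
          (Finset.univ.image t) ∩ (Finset.univ.image u) := by
        intro x hx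
        simp only [Finset.mem_image, Finset.mem_erase, Finset.mem_univ, and_true] at hx
        obtain ⟨l, hl, rfl⟩ := hx
        rw [Finset.mem_inter]
        constructor
        · have : u l = Function.update u m' j' l := (Function.update_of_ne hl _ _).symm
          rw [this, hc]
          simp only [Finset.mem_image, Finset.mem_univ, true_and, Function.comp_apply]
          exact ⟨σ l, rfl⟩
        · simp only [Finset.mem_image, Finset.mem_univ, true_and]
          exact ⟨l, rfl⟩
      have hcard2 : ((Finset.univ.erase m').image u).card = k - 1 := by
        rw [Finset.card_image_of_injective _ hu, Finset.card_erase_of_mem (Finset.mem_univ m'),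
          Finset.card_fin]
      have := Finset.card_le_card hsub
      omega
    rw [hz0, mul_zero]
  rw [hz1, sub_zero]

end aux

/-- Values of the contravariant form on the vectors `v_{i_1,…,i_k}`:
zero if the index sets share fewer than `k−1` elements; `−(a_{i_1}⋯a_{i_{k+1}})/|a|` if the
tuples agree except in one position (with `k+1` distinct indices in total); and
`(∑_{j ∉ {i_1,…,i_k}} a_j)(a_{i_1}⋯a_{i_k})/|a|` on the diagonal. -/
theorem stmt_18 (n k : ℕ) (hk : 1 ≤ k) (hkn : k < n)
    (a : Fin n → ℂ) (ha : ∀ j, a j ≠ 0) (hA : (∑ j, a j) ≠ 0) :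
    (∀ t u : Fin k → Fin n, Function.Injective t → Function.Injective u →
      ((Finset.univ.image t) ∩ (Finset.univ.image u)).card < k - 1 →
      Sk a (vk a t) (vk a u) = 0) ∧
    (∀ t : Fin k → Fin n, Function.Injective t → ∀ m : Fin k, ∀ q : Fin n,
      q ∉ Set.range t →
      Sk a (vk a t) (vk a (Function.update t m q)) =
        -((∏ l, a (t l)) * a q) / (∑ j, a j)) ∧
    (∀ t : Fin k → Fin n, Function.Injective t →
      Sk a (vk a t) (vk a t) =
        (∑ j ∈ Finset.univ \ Finset.univ.image t, a j) * (∏ l, a (t l)) / (∑ j, a j)) := by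
  refine ⟨?_, ?_, ?_⟩
  · intro t u ht hu hcard
    rw [Sk_vk a hA t u ht, vk_far a t u ht hu hcard, mul_zero]
  · intro t ht m q hq
    rw [Sk_vk a hA t _ ht, vk_update_at a t ht m q hq]
    field_simp
  · intro t ht
    rw [Sk_vk a hA t t ht, vk_self a t ht]
    have hsum : ∑ j ∈ Finset.univ \ Finset.univ.image t, a j
        = (∑ j, a j) - ∑ m : Fin k, a (t m) := by
      rw [Finset.sum_sdiff_eq_sub (Finset.subset_univ _)]
      congr 1
      rw [Finset.sum_image (fun x _ y _ h => ht h)]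
    rw [hsum]
    rw [show (1 : ℂ) - ∑ m : Fin k, (a (t m) / ∑ j, a j)
        = ((∑ j, a j) - ∑ m : Fin k, a (t m)) / (∑ j, a j) from by
      rw [← Finset.sum_div, sub_div, div_self hA]]
    ring
end

section
/- For every z ∈ ℂ^n with f_{i_1,…,i_{k+1}}(z) ≠ 0 for all (k+1)-tuples of distinct indices, and all pairwise distinct i_1,…,i_{k+1} ∈ {1,…,n}: K_{i_1}(z) v_{i_2,…,i_{k+1}} = (d_{i_2,…,i_{k+1}}/f_{i_1,i_2,…,i_{k+1}}(z)) · Σ_{ℓ=1}^{k+1} (−1)^{ℓ+1} a_{i_ℓ} v_{i_1,…,\widehat{i_ℓ},…,i_{k+1}}; moreover for pairwise distinct i_1,…,i_k: K_{i_1}(z) v_{i_1,i_2,…,i_k} = −Σ_{m ∉ {i_1,…,i_k}} K_{i_1}(z) v_{m,i_2,…,i_k}. -/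
open Finset

attribute [local instance] Classical.propDecidable

/-- `d_{i_1,…,i_k} = det(b_{i_1},…,b_{i_k})`, the determinant of the `k×k` matrix whose
rows are the vectors `b_{t(0)},…,b_{t(k-1)} ∈ ℂ^k`. -/
noncomputable def dk {n k : ℕ} (b : Fin n → Fin k → ℂ) (t : Fin k → Fin n) : ℂ :=
  Matrix.det (Matrix.of fun l m : Fin k => b (t l) m)

/-- `f_{i_1,…,i_{k+1}}(z) = ∑_m (−1)^{m−1} z_{i_m} d_{i_1,…,\hat{i_m},…,i_{k+1}}`
(0-based signs), where the `m`-th index is removed via `Fin.succAbove`. -/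
noncomputable def fk {n k : ℕ} (b : Fin n → Fin k → ℂ) (z : Fin n → ℂ)
    (s : Fin (k + 1) → Fin n) : ℂ :=
  ∑ m : Fin (k + 1), (-1) ^ (m : ℕ) * z (s m) * dk b (s ∘ m.succAbove)

/-- The operator `L_{i_1,…,i_{k+1}}` with
`L(F_{i_1,…,\hat{i_m},…,i_{k+1}}) = (−1)^m ∑_ℓ (−1)^ℓ a_{i_ℓ} F_{i_1,…,\hat{i_ℓ},…,i_{k+1}}`
and `L(F_{j_1,…,j_k}) = 0` for `{j_1,…,j_k} ⊄ {i_1,…,i_{k+1}}`, written on coordinates. -/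
noncomputable def Lk {n k : ℕ} (a : Fin n → ℂ) (s : Fin (k + 1) → Fin n) :
    ((Fin k → Fin n) → ℂ) →ₗ[ℂ] ((Fin k → Fin n) → ℂ) where
  toFun x := (∑ m : Fin (k + 1), (-1) ^ (m : ℕ) * x (s ∘ m.succAbove)) •
    (∑ l : Fin (k + 1), ((-1) ^ (l : ℕ) * a (s l)) • Fk (s ∘ l.succAbove))
  map_add' x y := by
    simp only [Pi.add_apply, mul_add, Finset.sum_add_distrib, add_smul]
  map_smul' c x := by
    simp only [Pi.smul_apply, smul_eq_mul, RingHom.id_apply]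
    rw [smul_smul]
    congr 1
    rw [Finset.mul_sum]
    exact Finset.sum_congr rfl fun m _ => by ring

/-- The operator `K_i(z) = ∑ (d_{i_1,…,i_k}/f_{i,i_1,…,i_k}(z)) L_{i,i_1,…,i_k}`, the sum
over unordered `k`-element subsets `{i_1,…,i_k} ⊆ {1,…,n} ∖ {i}` (realized by strictly
increasing tuples avoiding `i`). -/
noncomputable def Kk {n k : ℕ} (a : Fin n → ℂ) (b : Fin n → Fin k → ℂ) (z : Fin n → ℂ)
    (i : Fin n) : ((Fin k → Fin n) → ℂ) →ₗ[ℂ] ((Fin k → Fin n) → ℂ) :=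
  ∑ t ∈ Finset.univ.filter (fun t : Fin k → Fin n => StrictMono t ∧ ∀ l, t l ≠ i),
    (dk b t / fk b z (Fin.cons i t)) • Lk a (Fin.cons i t)

section Aux

open Matrix Equiv

variable {n k : ℕ}

/-- Signs as complex numbers. -/
noncomputable def sgnC {k : ℕ} (σ : Equiv.Perm (Fin k)) : ℂ :=
  ((Equiv.Perm.sign σ : ℤ) : ℂ)

lemma sgnC_mul_self (σ : Equiv.Perm (Fin k)) : sgnC σ * sgnC σ = 1 := by
  rcases Int.units_eq_one_or (Equiv.Perm.sign σ) with h | h <;> simp [sgnC, h]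

lemma sgnC_ne_zero (σ : Equiv.Perm (Fin k)) : sgnC σ ≠ 0 := by
  rcases Int.units_eq_one_or (Equiv.Perm.sign σ) with h | h <;> simp [sgnC, h]

/-- The indicator matrix whose determinant is `Fk t r`. -/
noncomputable def Dmat (t r : Fin k → Fin n) : Matrix (Fin k) (Fin k) ℂ :=
  Matrix.of fun l p => if t l = r p then 1 else 0

/-- Bordered indicator matrix (ones row on top). -/
noncomputable def Emat (t : Fin k → Fin n) (s : Fin (k + 1) → Fin n) :
    Matrix (Fin (k + 1)) (Fin (k + 1)) ℂ :=
  Matrix.of (Fin.cons (fun _ => 1) (fun l => fun p => if t l = s p then 1 else 0))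

/-- Bordered indicator matrix (a-column on the left). -/
noncomputable def Hmat (a : Fin n → ℂ) (s : Fin (k + 1) → Fin n) (r : Fin k → Fin n) :
    Matrix (Fin (k + 1)) (Fin (k + 1)) ℂ :=
  Matrix.of fun l => Fin.cons (a (s l)) fun p => if s l = r p then 1 else 0

/-- Doubly bordered indicator matrix. -/
noncomputable def Bmat (a : Fin n → ℂ) (w r : Fin k → Fin n) :
    Matrix (Fin (k + 1)) (Fin (k + 1)) ℂ :=
  Matrix.of (Fin.cons (Fin.cons 0 fun _ => 1)
    (fun m => Fin.cons (a (w m)) fun p => if w m = r p then 1 else 0))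

/-- Triply bordered indicator matrix, with two equal columns. -/
noncomputable def Qmat (a : Fin n → ℂ) (s : Fin (k + 1) → Fin n) (r : Fin k → Fin n) :
    Matrix (Fin (k + 2)) (Fin (k + 2)) ℂ :=
  Matrix.of (Fin.cons (Fin.cons 0 (Fin.cons 0 fun _ => 1))
    (fun l => Fin.cons (a (s l)) (Fin.cons (a (s l)) fun p => if s l = r p then 1 else 0)))

/-- The vector `w_s = ι_a (e_{s_0} ∧ ⋯ ∧ e_{s_k})`. -/
noncomputable def wVec (a : Fin n → ℂ) (s : Fin (k + 1) → Fin n) : (Fin k → Fin n) → ℂ :=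
  ∑ l : Fin (k + 1), ((-1) ^ (l : ℕ) * a (s l)) • Fk (s ∘ l.succAbove)

lemma Fk_eq_det (t r : Fin k → Fin n) : Fk t r = (Dmat t r).det := by
  rw [Matrix.det_apply]
  have h : ∀ σ : Equiv.Perm (Fin k),
      Equiv.Perm.sign σ • ∏ p, Dmat t r (σ p) p
        = ((Equiv.Perm.sign σ⁻¹ : ℤ) : ℂ) * (if t = r ∘ ⇑σ⁻¹ then 1 else 0) := by
    intro σ
    rw [Units.smul_def, zsmul_eq_mul, Equiv.Perm.sign_inv]
    congr 1
    by_cases hc : t = r ∘ ⇑σ⁻¹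
    · rw [if_pos hc]
      have hall : ∀ p, Dmat t r (σ p) p = 1 := by
        intro p
        show (if t (σ p) = r p then (1 : ℂ) else 0) = 1
        rw [if_pos (by rw [hc]; simp)]
      rw [Finset.prod_congr rfl fun p _ => hall p]
      simp
    · rw [if_neg hc]
      have hex : ¬∀ p, t (σ p) = r p := fun hall => hc (by funext x; simpa using hall (σ⁻¹ x))
      push_neg at hex
      obtain ⟨p, hp⟩ := hex
      refine Finset.prod_eq_zero (Finset.mem_univ p) ?_
      show (if t (σ p) = r p then (1 : ℂ) else 0) = 0
      rw [if_neg hp]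
  rw [Finset.sum_congr rfl fun σ _ => h σ]
  exact (Equiv.sum_comp (Equiv.inv (Equiv.Perm (Fin k)))
    (fun τ => ((Equiv.Perm.sign τ : ℤ) : ℂ) * (if t = r ∘ ⇑τ then 1 else 0))).symm

lemma Fk_apply_eq_zero_of_not_injective {t : Fin k → Fin n}
    (h : ¬Function.Injective t) (r : Fin k → Fin n) : Fk t r = 0 := by
  rw [Function.not_injective_iff] at h
  obtain ⟨l1, l2, hval, hne⟩ := h
  rw [Fk_eq_det]
  refine Matrix.det_zero_of_row_eq hne ?_
  funext p
  show (if t l1 = r p then (1 : ℂ) else 0) = (if t l2 = r p then (1 : ℂ) else 0)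
  rw [hval]

lemma det_updateRow_finset_sum {ι : Type*} [DecidableEq ι] [Fintype ι] {α : Type*}
    (M : Matrix ι ι ℂ) (i : ι) (t : Finset α) (f : α → ι → ℂ) :
    (M.updateRow i (∑ j ∈ t, f j)).det = ∑ j ∈ t, (M.updateRow i (f j)).det := by
  classical
  induction t using Finset.induction_on with
  | empty =>
    rw [Finset.sum_empty, Finset.sum_empty]
    exact Matrix.det_eq_zero_of_row_eq_zero i (fun j => by simp)
  | insert _ _ hx ih =>
    rw [Finset.sum_insert hx, Finset.sum_insert hx, ← ih, Matrix.det_updateRow_add]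

/-- `φ_s(F_t)` is the bordered determinant. -/
lemma phi_Fk (t : Fin k → Fin n) (s : Fin (k + 1) → Fin n) :
    ∑ m : Fin (k + 1), (-1) ^ (m : ℕ) * Fk t (s ∘ m.succAbove) = (Emat t s).det := by
  rw [Matrix.det_succ_row_zero]
  refine Finset.sum_congr rfl fun j _ => ?_
  have h0 : Emat t s 0 j = 1 := rfl
  have hsub : (Emat t s).submatrix Fin.succ j.succAbove = Dmat t (s ∘ j.succAbove) := by
    ext l p
    simp [Emat, Dmat, Matrix.submatrix_apply, Fin.cons_succ]
  rw [h0, hsub, mul_one, Fk_eq_det]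

lemma Emat_update (u : Fin k → Fin n) (s : Fin (k + 1) → Fin n) (m : Fin k) (j : Fin n) :
    Emat (Function.update u m j) s
      = (Emat u s).updateRow m.succ (fun p => if j = s p then 1 else 0) := by
  ext l p
  refine Fin.cases ?_ (fun x => ?_) l
  · rw [Matrix.updateRow_ne (Fin.succ_ne_zero m).symm]
    rfl
  · by_cases hx : x = m
    · subst hx
      rw [Matrix.updateRow_self]
      show (if Function.update u x j x = s p then (1:ℂ) else 0) = _
      rw [Function.update_self]
    · rw [Matrix.updateRow_ne (fun hc => hx (Fin.succ_injective _ hc))]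
      show (if Function.update u m j x = s p then (1:ℂ) else 0)
          = (if u x = s p then (1:ℂ) else 0)
      rw [Function.update_of_ne hx]

lemma sum_det_Emat_update (u : Fin k → Fin n) (s : Fin (k + 1) → Fin n) (m : Fin k) :
    ∑ j : Fin n, (Emat (Function.update u m j) s).det = 0 := by
  have h1 : ∀ j : Fin n, (Emat (Function.update u m j) s).det
      = ((Emat u s).updateRow m.succ (fun p => if j = s p then 1 else 0)).det := by
    intro j; rw [Emat_update]
  rw [Finset.sum_congr rfl fun j _ => h1 j, ← det_updateRow_finset_sum]
  have hones : (∑ j : Fin n, fun p : Fin (k + 1) => if j = s p then (1 : ℂ) else 0)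
      = fun _ => 1 := by
    funext p
    rw [Finset.sum_apply]
    simp
  rw [hones]
  refine Matrix.det_zero_of_row_eq (Fin.succ_ne_zero m).symm ?_
  rw [Matrix.updateRow_ne (Fin.succ_ne_zero m).symm, Matrix.updateRow_self]
  rfl

/-- `φ_s(v_u) = φ_s(F_u)` : the key cancellation, in determinant form. -/
lemma phi_vk (a : Fin n → ℂ) (u : Fin k → Fin n) (s : Fin (k + 1) → Fin n) :
    ∑ m : Fin (k + 1), (-1) ^ (m : ℕ) * vk a u (s ∘ m.succAbove) = (Emat u s).det := by
  by_cases h : Function.Injective u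
  · have expand : ∀ m : Fin (k + 1), vk a u (s ∘ m.succAbove)
        = Fk u (s ∘ m.succAbove) - ∑ m' : Fin k, (a (u m') / ∑ j, a j) *
            ∑ j : Fin n, Fk (Function.update u m' j) (s ∘ m.succAbove) := by
      intro m
      rw [vk, if_pos h]
      simp [Finset.sum_apply, Pi.smul_apply, smul_eq_mul]
    have step : ∀ m : Fin (k + 1), (-1 : ℂ) ^ (m : ℕ) * vk a u (s ∘ m.succAbove)
        = (-1) ^ (m : ℕ) * Fk u (s ∘ m.succAbove)
          - ∑ m' : Fin k, ∑ j : Fin n, (a (u m') / ∑ j, a j) *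
              ((-1) ^ (m : ℕ) * Fk (Function.update u m' j) (s ∘ m.succAbove)) := by
      intro m
      rw [expand m, mul_sub]
      congr 1
      rw [Finset.mul_sum]
      refine Finset.sum_congr rfl fun m' _ => ?_
      rw [Finset.mul_sum, Finset.mul_sum]
      refine Finset.sum_congr rfl fun j _ => ?_
      ring
    rw [Finset.sum_congr rfl fun m _ => step m, Finset.sum_sub_distrib, phi_Fk]
    have hzero : ∑ m : Fin (k + 1), ∑ m' : Fin k, ∑ j : Fin n,
        (a (u m') / ∑ j, a j) *
          ((-1 : ℂ) ^ (m : ℕ) * Fk (Function.update u m' j) (s ∘ m.succAbove)) = 0 := by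
      rw [Finset.sum_comm]
      refine Finset.sum_eq_zero fun m' _ => ?_
      rw [Finset.sum_comm]
      have hj : ∀ j : Fin n, ∑ m : Fin (k + 1),
          (a (u m') / ∑ j, a j) *
            ((-1 : ℂ) ^ (m : ℕ) * Fk (Function.update u m' j) (s ∘ m.succAbove))
          = (a (u m') / ∑ j, a j) * (Emat (Function.update u m' j) s).det := by
        intro j
        rw [← Finset.mul_sum, phi_Fk]
      rw [Finset.sum_congr rfl fun j _ => hj j, ← Finset.mul_sum, sum_det_Emat_update,
        mul_zero]
    rw [hzero, sub_zero]
  · have h1 : vk a u = 0 := by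
      rw [vk, if_neg h]
    have hz : ∀ m : Fin (k + 1), (-1 : ℂ) ^ (m : ℕ) * vk a u (s ∘ m.succAbove) = 0 := by
      intro m
      rw [h1]
      simp
    rw [Finset.sum_congr rfl fun m _ => hz m, Finset.sum_const_zero]
    obtain ⟨l1, l2, hval, hne⟩ := Function.not_injective_iff.mp h
    symm
    refine Matrix.det_zero_of_row_eq (i := l1.succ) (j := l2.succ)
      (fun hc => hne (Fin.succ_injective _ hc)) ?_
    funext p
    show (if u l1 = s p then (1 : ℂ) else 0) = (if u l2 = s p then (1 : ℂ) else 0)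
    rw [hval]

lemma Dmat_update (w r : Fin k → Fin n) (m : Fin k) (j : Fin n) :
    Dmat (Function.update w m j) r
      = (Dmat w r).updateRow m (fun p => if j = r p then 1 else 0) := by
  ext l p
  by_cases hl : l = m
  · subst hl
    rw [Matrix.updateRow_self]
    show (if Function.update w l j l = r p then (1 : ℂ) else 0) = _
    rw [Function.update_self]
  · rw [Matrix.updateRow_ne hl]
    show (if Function.update w m j l = r p then (1 : ℂ) else 0)
        = (if w l = r p then (1 : ℂ) else 0)
    rw [Function.update_of_ne hl]

lemma sum_Fk_update (w r : Fin k → Fin n) (m : Fin k) :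
    ∑ j : Fin n, Fk (Function.update w m j) r
      = ((Dmat w r).updateRow m (fun _ => 1)).det := by
  have h1 : ∀ j : Fin n, Fk (Function.update w m j) r
      = ((Dmat w r).updateRow m (fun p => if j = r p then 1 else 0)).det := by
    intro j; rw [Fk_eq_det, Dmat_update]
  rw [Finset.sum_congr rfl fun j _ => h1 j, ← det_updateRow_finset_sum]
  have hones : (∑ j : Fin n, fun p : Fin k => if j = r p then (1 : ℂ) else 0)
      = fun _ : Fin k => (1 : ℂ) := by
    funext p
    rw [Finset.sum_apply]
    simp
  rw [hones]

/-- Laplace expansion of `Bmat` along its first column. -/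
lemma Bmat_det (a : Fin n → ℂ) (w r : Fin k → Fin n) :
    ∑ m : Fin k, a (w m) * ∑ j : Fin n, Fk (Function.update w m j) r
      = -(Bmat a w r).det := by
  cases k with
  | zero => simp [Matrix.det_fin_one, Bmat]
  | succ k' =>
    have hmin : ∀ m : Fin (k' + 1), (Dmat w r).updateRow m (fun _ => 1)
        = ((Bmat a w r).submatrix m.succ.succAbove Fin.succ).submatrix
            ⇑(Fin.cycleRange m) id := by
      intro m
      ext l p
      rw [Matrix.submatrix_apply, Matrix.submatrix_apply, id_eq]
      rcases lt_trichotomy l m with h | h | h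
      · rw [Matrix.updateRow_ne (ne_of_lt h), Fin.cycleRange_of_lt h]
        have hlast : l < Fin.last k' := lt_of_lt_of_le h (Fin.le_last m)
        have hval : ((l + 1 : Fin (k' + 1)) : ℕ) = (l : ℕ) + 1 :=
          Fin.val_add_one_of_lt hlast
        have hsa : m.succ.succAbove (l + 1) = l.succ := by
          rw [Fin.succAbove_of_castSucc_lt]
          · apply Fin.ext
            simp [Fin.coe_castSucc, hval]
          · rw [Fin.lt_def]
            simp only [Fin.coe_castSucc, hval, Fin.val_succ]
            exact Nat.succ_lt_succ h
        rw [hsa]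
        simp [Dmat, Bmat, Fin.cons_succ]
      · subst h
        rw [Matrix.updateRow_self, Fin.cycleRange_self, Fin.succ_succAbove_zero]
        simp [Bmat]
      · rw [Matrix.updateRow_ne (ne_of_gt h), Fin.cycleRange_of_gt h]
        have hsa : m.succ.succAbove l = l.succ := by
          rw [Fin.succAbove_of_le_castSucc]
          rw [Fin.le_def]
          simp only [Fin.coe_castSucc, Fin.val_succ]
          exact h
        rw [hsa]
        simp [Dmat, Bmat, Fin.cons_succ]
    have hsub : ∀ m : Fin (k' + 1), ((Dmat w r).updateRow m (fun _ => 1)).det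
        = ((-1 : ℂ) ^ (m : ℕ)) *
            ((Bmat a w r).submatrix m.succ.succAbove Fin.succ).det := by
      intro m
      rw [hmin m, Matrix.det_permute, Fin.sign_cycleRange]
      norm_num
    have hL := Matrix.det_succ_column_zero (Bmat a w r)
    rw [Fin.sum_univ_succ] at hL
    have h0 : Bmat a w r 0 0 = 0 := by simp [Bmat]
    rw [h0] at hL
    have hterm : ∀ m : Fin (k' + 1),
        (-1 : ℂ) ^ ((m.succ : Fin (k' + 2)) : ℕ) * Bmat a w r m.succ 0 *
          ((Bmat a w r).submatrix m.succ.succAbove Fin.succ).det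
        = -(a (w m) * ∑ j : Fin n, Fk (Function.update w m j) r) := by
      intro m
      have hB0 : Bmat a w r m.succ 0 = a (w m) := by simp [Bmat, Fin.cons_succ, Fin.cons_zero]
      rw [hB0, sum_Fk_update, hsub m, Fin.val_succ, pow_succ]
      ring
    rw [Finset.sum_congr rfl fun m _ => hterm m] at hL
    simp only [mul_zero, zero_mul, zero_add, Finset.sum_neg_distrib] at hL
    rw [hL, neg_neg]

/-- The `Q`-matrix has two equal columns, giving the key alternating-sum identity. -/
lemma sum_Bmat_det (a : Fin n → ℂ) (s : Fin (k + 1) → Fin n) (r : Fin k → Fin n) :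
    ∑ l : Fin (k + 1), (-1) ^ (l : ℕ) * a (s l) * (Bmat a (s ∘ l.succAbove) r).det = 0 := by
  have hsub : ∀ l : Fin (k + 1),
      (Qmat a s r).submatrix (l.succ).succAbove Fin.succ = Bmat a (s ∘ l.succAbove) r := by
    intro l
    ext x p
    refine Fin.cases ?_ (fun y => ?_) x
    · rw [Matrix.submatrix_apply, Fin.succ_succAbove_zero]
      simp [Qmat, Bmat, Fin.cons_succ]
    · rw [Matrix.submatrix_apply, Fin.succ_succAbove_succ]
      simp [Qmat, Bmat, Fin.cons_succ]
  have hQ0 : (Qmat a s r).det = 0 := by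
    rw [← Matrix.det_transpose]
    refine Matrix.det_zero_of_row_eq (i := (0 : Fin (k + 2))) (j := 1) zero_ne_one ?_
    funext x
    refine Fin.cases ?_ (fun y => ?_) x <;>
      simp [Qmat, Matrix.transpose_apply, Fin.cons_succ, Fin.cons_zero]
  have hL := Matrix.det_succ_column_zero (Qmat a s r)
  rw [Fin.sum_univ_succ] at hL
  have hterm : ∀ l : Fin (k + 1),
      (-1 : ℂ) ^ ((l.succ : Fin (k + 2)) : ℕ) * Qmat a s r l.succ 0 *
        ((Qmat a s r).submatrix (l.succ).succAbove Fin.succ).det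
      = -((-1) ^ (l : ℕ) * a (s l) * (Bmat a (s ∘ l.succAbove) r).det) := by
    intro l
    rw [hsub l]
    have hQ : Qmat a s r l.succ 0 = a (s l) := by simp [Qmat, Fin.cons_succ, Fin.cons_zero]
    rw [hQ, Fin.val_succ, pow_succ]
    ring
  rw [Finset.sum_congr rfl fun l _ => hterm l, hQ0] at hL
  have h0 : Qmat a s r 0 0 = 0 := by simp [Qmat]
  rw [h0] at hL
  simp only [mul_zero, zero_mul, zero_add, Finset.sum_neg_distrib] at hL
  exact neg_eq_zero.mp hL.symm

/-- Uniform closed formula for `vk`. -/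
lemma vk_apply (a : Fin n → ℂ) (w r : Fin k → Fin n) :
    vk a w r = Fk w r + (∑ j, a j)⁻¹ * (Bmat a w r).det := by
  by_cases h : Function.Injective w
  · rw [vk, if_pos h]
    have : (Fk w - ∑ m : Fin k, (a (w m) / ∑ j, a j) •
        ∑ j : Fin n, Fk (Function.update w m j)) r
        = Fk w r - ∑ m : Fin k, (a (w m) / ∑ j, a j) *
            ∑ j : Fin n, Fk (Function.update w m j) r := by
      simp [Finset.sum_apply, Pi.smul_apply, smul_eq_mul]
    rw [this]
    have hB := Bmat_det a w r
    have : ∑ m : Fin k, (a (w m) / ∑ j, a j) * ∑ j : Fin n, Fk (Function.update w m j) r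
        = (∑ j, a j)⁻¹ * ∑ m : Fin k, a (w m) * ∑ j : Fin n, Fk (Function.update w m j) r := by
      rw [Finset.mul_sum]
      refine Finset.sum_congr rfl fun m _ => ?_
      rw [div_eq_mul_inv]
      ring
    rw [this, hB]
    ring
  · obtain ⟨l1, l2, hval, hne⟩ := Function.not_injective_iff.mp h
    rw [vk, if_neg h]
    have h1 : Fk w r = 0 := Fk_apply_eq_zero_of_not_injective h r
    have h2 : (Bmat a w r).det = 0 := by
      refine Matrix.det_zero_of_row_eq (i := l1.succ) (j := l2.succ)
        (fun hc => hne (Fin.succ_injective _ hc)) ?_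
      funext p
      simp [Bmat, Fin.cons_succ, hval]
    rw [h1, h2]
    simp

/-- The `W`-lemma: `∑ (-1)^l a_{s_l} v_{s∘ŝ_l} = w_s`. -/
lemma W_lemma (a : Fin n → ℂ) (s : Fin (k + 1) → Fin n) :
    ∑ l : Fin (k + 1), ((-1) ^ (l : ℕ) * a (s l)) • vk a (s ∘ Fin.succAbove l) = wVec a s := by
  funext r
  rw [Finset.sum_apply, wVec, Finset.sum_apply]
  have h1 : ∀ l : Fin (k + 1),
      (((-1 : ℂ) ^ (l : ℕ) * a (s l)) • vk a (s ∘ Fin.succAbove l)) r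
      = ((-1) ^ (l : ℕ) * a (s l)) * Fk (s ∘ l.succAbove) r
        + (∑ j, a j)⁻¹ * ((-1) ^ (l : ℕ) * a (s l) * (Bmat a (s ∘ l.succAbove) r).det) := by
    intro l
    rw [Pi.smul_apply, smul_eq_mul, vk_apply]
    ring
  rw [Finset.sum_congr rfl fun l _ => h1 l, Finset.sum_add_distrib, ← Finset.mul_sum,
    sum_Bmat_det, mul_zero, add_zero]
  refine Finset.sum_congr rfl fun l _ => ?_
  rw [Pi.smul_apply, smul_eq_mul]

/-- `wVec` evaluated is the bordered determinant `Hmat`. -/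
lemma wVec_apply (a : Fin n → ℂ) (s : Fin (k + 1) → Fin n) (r : Fin k → Fin n) :
    wVec a s r = (Hmat a s r).det := by
  rw [Matrix.det_succ_column_zero, wVec, Finset.sum_apply]
  refine Finset.sum_congr rfl fun l _ => ?_
  have h0 : Hmat a s r l 0 = a (s l) := rfl
  have hsub : (Hmat a s r).submatrix l.succAbove Fin.succ = Dmat (s ∘ l.succAbove) r := by
    ext x p
    simp [Hmat, Dmat, Matrix.submatrix_apply, Fin.cons_succ]
  rw [h0, hsub, Pi.smul_apply, smul_eq_mul, Fk_eq_det]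

lemma wVec_perm (a : Fin n → ℂ) (s : Fin (k + 1) → Fin n) (σ : Equiv.Perm (Fin (k + 1))) :
    wVec a (s ∘ ⇑σ) = sgnC σ • wVec a s := by
  funext r
  rw [Pi.smul_apply, wVec_apply, wVec_apply, smul_eq_mul]
  have h : Hmat a (s ∘ ⇑σ) r = (Hmat a s r).submatrix ⇑σ id := by
    ext l p
    simp [Hmat, Matrix.submatrix_apply]
  rw [h, Matrix.det_permute]
  norm_num [sgnC]

/-- `fk` as a bordered determinant. -/
noncomputable def Gmat (b : Fin n → Fin k → ℂ) (z : Fin n → ℂ) (s : Fin (k + 1) → Fin n) :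
    Matrix (Fin (k + 1)) (Fin (k + 1)) ℂ :=
  Matrix.of fun m => Fin.cons (z (s m)) (b (s m))

lemma fk_eq_det (b : Fin n → Fin k → ℂ) (z : Fin n → ℂ) (s : Fin (k + 1) → Fin n) :
    fk b z s = (Gmat b z s).det := by
  rw [Matrix.det_succ_column_zero, fk]
  refine Finset.sum_congr rfl fun m _ => ?_
  have h0 : Gmat b z s m 0 = z (s m) := rfl
  have hsub : (Gmat b z s).submatrix m.succAbove Fin.succ
      = Matrix.of fun l c : Fin k => b ((s ∘ m.succAbove) l) c := by
    ext x p
    simp [Gmat, Matrix.submatrix_apply, Fin.cons_succ]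
  rw [h0, hsub, dk]

lemma fk_perm (b : Fin n → Fin k → ℂ) (z : Fin n → ℂ) (s : Fin (k + 1) → Fin n)
    (σ : Equiv.Perm (Fin (k + 1))) :
    fk b z (s ∘ ⇑σ) = sgnC σ * fk b z s := by
  rw [fk_eq_det, fk_eq_det]
  have h : Gmat b z (s ∘ ⇑σ) = (Gmat b z s).submatrix ⇑σ id := by
    ext l p
    simp [Gmat, Matrix.submatrix_apply]
  rw [h, Matrix.det_permute]
  norm_num [sgnC]

lemma dk_perm (b : Fin n → Fin k → ℂ) (t : Fin k → Fin n) (σ : Equiv.Perm (Fin k)) :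
    dk b (t ∘ ⇑σ) = sgnC σ * dk b t := by
  rw [dk, dk]
  have h : (Matrix.of fun l m : Fin k => b ((t ∘ ⇑σ) l) m)
      = (Matrix.of fun l m : Fin k => b (t l) m).submatrix ⇑σ id := by
    ext l p
    simp [Matrix.submatrix_apply]
  rw [h, Matrix.det_permute]
  norm_num [sgnC]

lemma Emat_perm (t : Fin k → Fin n) (s : Fin (k + 1) → Fin n) (σ : Equiv.Perm (Fin (k + 1))) :
    (Emat t (s ∘ ⇑σ)).det = sgnC σ * (Emat t s).det := by
  have h : Emat t (s ∘ ⇑σ) = (Emat t s).submatrix id ⇑σ := by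
    ext l p
    refine Fin.cases ?_ (fun x => ?_) l
    · rfl
    · simp [Emat, Matrix.submatrix_apply, Fin.cons_succ]
  rw [h, Matrix.det_permute']
  norm_num [sgnC]

/-- `det (Emat (tail s) s) = 1` for injective `s`. -/
lemma det_Emat_tail (s : Fin (k + 1) → Fin n) (hs : Function.Injective s) :
    (Emat (s ∘ Fin.succAbove 0) s).det = 1 := by
  rw [Matrix.det_succ_column_zero, Fin.sum_univ_succ]
  have h00 : Emat (s ∘ Fin.succAbove 0) s 0 0 = 1 := rfl
  have hz : ∀ x : Fin k, Emat (s ∘ Fin.succAbove 0) s x.succ 0 = 0 := by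
    intro x
    show (if (s ∘ Fin.succAbove 0) x = s 0 then (1:ℂ) else 0) = 0
    rw [if_neg]
    intro hc
    exact Fin.succAbove_ne 0 x (hs hc)
  have hsub : (Emat (s ∘ Fin.succAbove 0) s).submatrix (0 : Fin (k + 1)).succAbove Fin.succ
      = (1 : Matrix (Fin k) (Fin k) ℂ) := by
    ext x p
    rw [Matrix.submatrix_apply, Fin.succAbove_zero, Matrix.one_apply]
    show (if (s ∘ Fin.succAbove 0) x = s p.succ then (1:ℂ) else 0) = _
    refine if_congr ?_ rfl rfl
    rw [Fin.succAbove_zero]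
    constructor
    · intro hc
      exact Fin.succ_injective _ (hs hc)
    · rintro rfl
      rfl
  rw [h00, hsub, Matrix.det_one]
  have hrest : ∀ x : Fin k, (-1 : ℂ) ^ ((x.succ : Fin (k + 1)) : ℕ) *
      Emat (s ∘ Fin.succAbove 0) s x.succ 0 *
      ((Emat (s ∘ Fin.succAbove 0) s).submatrix x.succ.succAbove Fin.succ).det = 0 := by
    intro x
    rw [hz x]
    ring
  rw [Finset.sum_congr rfl fun x _ => hrest x]
  simp

lemma Lk_vk (a : Fin n → ℂ) (s : Fin (k + 1) → Fin n) (u : Fin k → Fin n) :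
    Lk a s (vk a u) = (Emat u s).det • wVec a s := by
  have h : Lk a s (vk a u) = (∑ m : Fin (k + 1), (-1) ^ (m : ℕ) * vk a u (s ∘ m.succAbove)) •
      (∑ l : Fin (k + 1), ((-1) ^ (l : ℕ) * a (s l)) • Fk (s ∘ l.succAbove)) := rfl
  rw [h, phi_vk]
  rfl

lemma Kk_vk (a : Fin n → ℂ) (b : Fin n → Fin k → ℂ) (z : Fin n → ℂ) (i : Fin n)
    (u : Fin k → Fin n) :
    Kk a b z i (vk a u)
      = ∑ t ∈ Finset.univ.filter (fun t : Fin k → Fin n => StrictMono t ∧ ∀ l, t l ≠ i),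
          (dk b t / fk b z (Fin.cons i t)) •
            ((Emat u (Fin.cons i t)).det • wVec a (Fin.cons i t)) := by
  rw [Kk, LinearMap.sum_apply]
  refine Finset.sum_congr rfl fun t _ => ?_
  rw [LinearMap.smul_apply, Lk_vk]

end Aux


/-- For `z` with `f ≠ 0` on all injective `(k+1)`-tuples and pairwise
distinct `i_1,…,i_{k+1}` (encoded as an injective tuple `s`, with `i_1 = s 0`):
`K_{i_1}(z) v_{i_2,…,i_{k+1}} = (d_{i_2,…,i_{k+1}}/f_{i_1,…,i_{k+1}}(z)) ∑_ℓ (−1)^{ℓ+1} a_{i_ℓ} v_{i_1,…,\hat{i_ℓ},…,i_{k+1}}`;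
moreover, for pairwise distinct `i_1,…,i_k`:
`K_{i_1}(z) v_{i_1,i_2,…,i_k} = −∑_{m ∉ {i_1,…,i_k}} K_{i_1}(z) v_{m,i_2,…,i_k}`. -/
theorem stmt_19 (n k : ℕ) (hk : 1 ≤ k) (hkn : k < n)
    (a : Fin n → ℂ) (ha : ∀ j, a j ≠ 0) (hA : (∑ j, a j) ≠ 0)
    (b : Fin n → Fin k → ℂ)
    (hb : ∀ t : Fin k → Fin n, Function.Injective t → dk b t ≠ 0)
    (z : Fin n → ℂ)
    (hz : ∀ s : Fin (k + 1) → Fin n, Function.Injective s → fk b z s ≠ 0) :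
    (∀ s : Fin (k + 1) → Fin n, Function.Injective s →
      Kk a b z (s 0) (vk a (s ∘ Fin.succAbove 0)) =
        (dk b (s ∘ Fin.succAbove 0) / fk b z s) •
          ∑ l : Fin (k + 1), ((-1) ^ (l : ℕ) * a (s l)) • vk a (s ∘ Fin.succAbove l)) ∧
    (∀ t : Fin k → Fin n, Function.Injective t →
      Kk a b z (t ⟨0, hk⟩) (vk a t) =
        -∑ m ∈ Finset.univ \ Finset.univ.image t,
          Kk a b z (t ⟨0, hk⟩) (vk a (Function.update t ⟨0, hk⟩ m))) := by
  constructor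
  · -- Statement 1
    intro s hs
    have hu : Function.Injective (s ∘ Fin.succAbove 0) :=
      hs.comp (Fin.succAbove_right_injective)
    set u : Fin k → Fin n := s ∘ Fin.succAbove 0 with hu_def
    have hui : ∀ l, u l ≠ s 0 := fun l hc => Fin.succAbove_ne 0 l (hs hc)
    set U : Finset (Fin n) := Finset.univ.image u with hU_def
    have hUcard : U.card = k := by
      rw [hU_def, Finset.card_image_of_injective _ hu, Finset.card_univ, Fintype.card_fin]
    set t₀ : Fin k → Fin n := fun l => U.orderEmbOfFin hUcard l with ht₀_def
    have ht₀mono : StrictMono t₀ := (U.orderEmbOfFin hUcard).strictMono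
    have ht₀mem : ∀ l, t₀ l ∈ U := fun l => Finset.orderEmbOfFin_mem U hUcard l
    have hiU : s 0 ∉ U := by
      rw [hU_def]
      simp only [Finset.mem_image, Finset.mem_univ, true_and, not_exists]
      exact hui
    have ht₀ne : ∀ l, t₀ l ≠ s 0 := fun l hc => hiU (hc ▸ ht₀mem l)
    have ht₀filter : t₀ ∈ Finset.univ.filter
        (fun t : Fin k → Fin n => StrictMono t ∧ ∀ l, t l ≠ s 0) := by
      simp only [Finset.mem_filter, Finset.mem_univ, true_and]
      exact ⟨ht₀mono, ht₀ne⟩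
    have hmem : ∀ l, u l ∈ U := fun l => Finset.mem_image_of_mem u (Finset.mem_univ l)
    have hbij : Function.Bijective (fun l : Fin k => (⟨u l, hmem l⟩ : {x // x ∈ U})) := by
      rw [Fintype.bijective_iff_injective_and_card]
      refine ⟨fun x y hxy => hu (congrArg Subtype.val hxy), ?_⟩
      rw [Fintype.card_coe, hUcard, Fintype.card_fin]
    set ρ : Equiv.Perm (Fin k) :=
      (Equiv.ofBijective _ hbij).trans (U.orderIsoOfFin hUcard).toEquiv.symm with hρ_def
    have hρ : t₀ ∘ ⇑ρ = u := by
      funext l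
      show ((U.orderEmbOfFin hUcard)
        ((U.orderIsoOfFin hUcard).toEquiv.symm (Equiv.ofBijective _ hbij l)) : Fin n) = u l
      rw [← Finset.coe_orderIsoOfFin_apply]
      simp [Equiv.ofBijective]
    set τ : Equiv.Perm (Fin (k + 1)) := Equiv.Perm.decomposeFin.symm (0, ρ) with hτ_def
    have hτs : (Fin.cons (s 0) t₀ : Fin (k + 1) → Fin n) ∘ ⇑τ = s := by
      funext x
      refine Fin.cases ?_ (fun y => ?_) x
      · rw [Function.comp_apply, hτ_def, Equiv.Perm.decomposeFin_symm_apply_zero, Fin.cons_zero]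
      · rw [Function.comp_apply, hτ_def, Equiv.Perm.decomposeFin_symm_apply_succ,
          Equiv.swap_self, Equiv.refl_apply, Fin.cons_succ]
        have h1 : t₀ (ρ y) = u y := congrFun hρ y
        rw [h1, hu_def]
        show s (Fin.succAbove 0 y) = s y.succ
        rw [Fin.succAbove_zero]
    have hsgnτ : sgnC τ = sgnC ρ := by
      rw [sgnC, sgnC, hτ_def, Equiv.Perm.decomposeFin.symm_sign]
      simp
    have hεε : sgnC ρ * sgnC ρ = 1 := sgnC_mul_self ρ
    have hεne : sgnC ρ ≠ 0 := sgnC_ne_zero ρ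
    have hd : dk b t₀ = sgnC ρ * dk b u := by
      have h1 : dk b (t₀ ∘ ⇑ρ) = sgnC ρ * dk b t₀ := dk_perm b t₀ ρ
      rw [hρ] at h1
      rw [h1, ← mul_assoc, hεε, one_mul]
    have hf : fk b z (Fin.cons (s 0) t₀) = sgnC ρ * fk b z s := by
      have h1 : fk b z ((Fin.cons (s 0) t₀ : Fin (k + 1) → Fin n) ∘ ⇑τ)
          = sgnC τ * fk b z (Fin.cons (s 0) t₀) := fk_perm b z _ τ
      rw [hτs, hsgnτ] at h1
      rw [h1, ← mul_assoc, hεε, one_mul]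
    have hEs : (Emat u s).det = 1 := det_Emat_tail s hs
    have hE : (Emat u (Fin.cons (s 0) t₀)).det = sgnC ρ := by
      have h1 : (Emat u ((Fin.cons (s 0) t₀ : Fin (k + 1) → Fin n) ∘ ⇑τ)).det
          = sgnC τ * (Emat u (Fin.cons (s 0) t₀)).det := Emat_perm u _ τ
      rw [hτs, hsgnτ, hEs] at h1
      calc (Emat u (Fin.cons (s 0) t₀)).det
          = (sgnC ρ * sgnC ρ) * (Emat u (Fin.cons (s 0) t₀)).det := by rw [hεε, one_mul]
        _ = sgnC ρ * (sgnC ρ * (Emat u (Fin.cons (s 0) t₀)).det) := by ring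
        _ = sgnC ρ * 1 := by rw [← h1]
        _ = sgnC ρ := mul_one _
    have hw : wVec a (Fin.cons (s 0) t₀) = sgnC ρ • wVec a s := by
      have h1 : wVec a ((Fin.cons (s 0) t₀ : Fin (k + 1) → Fin n) ∘ ⇑τ)
          = sgnC τ • wVec a (Fin.cons (s 0) t₀) := wVec_perm a _ τ
      rw [hτs, hsgnτ] at h1
      rw [h1, smul_smul, hεε, one_smul]
    rw [Kk_vk]
    rw [Finset.sum_eq_single t₀]
    · rw [hd, hf, hE, hw, W_lemma]
      rw [mul_div_mul_left _ _ hεne, smul_smul, smul_smul, mul_assoc, hεε, mul_one]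
    · intro t htmem htne
      by_cases hall : ∀ l, ∃ p, u l = (Fin.cons (s 0) t : Fin (k + 1) → Fin n) p
      · exfalso
        obtain ⟨htm, hti⟩ := (Finset.mem_filter.mp htmem).2
        have himg : ∀ l, ∃ q : Fin k, u l = t q := by
          intro l
          obtain ⟨p, hp⟩ := hall l
          refine Fin.cases ?_ (fun q hq => ⟨q, hq⟩) p hp
          intro hp0
          exact absurd (hp0.trans (Fin.cons_zero _ _)) (hui l)
        have hsubset : U ⊆ Finset.univ.image t := by
          intro x hx
          rw [hU_def, Finset.mem_image] at hx
          obtain ⟨l, _, rfl⟩ := hx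
          obtain ⟨q, hq⟩ := himg l
          rw [hq]
          exact Finset.mem_image_of_mem t (Finset.mem_univ q)
        have hcard : (Finset.univ.image t).card ≤ U.card := by
          rw [hUcard, Finset.card_image_of_injective _ htm.injective, Finset.card_univ,
            Fintype.card_fin]
        have heq : U = Finset.univ.image t :=
          Finset.eq_of_subset_of_card_le hsubset hcard
        have ht_eq : t = t₀ := by
          have := Finset.orderEmbOfFin_unique hUcard
            (f := t) (fun x => by rw [heq]; exact Finset.mem_image_of_mem t (Finset.mem_univ x))
            htm
          rw [ht₀_def]
          exact this
        exact htne ht_eq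
      · push_neg at hall
        obtain ⟨l, hl⟩ := hall
        have hdet0 : (Emat u (Fin.cons (s 0) t)).det = 0 := by
          refine Matrix.det_eq_zero_of_row_eq_zero l.succ (fun p => ?_)
          have hrow : Emat u (Fin.cons (s 0) t) l.succ p
              = (if u l = (Fin.cons (s 0) t : Fin (k + 1) → Fin n) p then (1 : ℂ) else 0) :=
            rfl
          rw [hrow, if_neg (hl p)]
        rw [hdet0, zero_smul, smul_zero]
    · intro hnot
      exact absurd ht₀filter hnot
  · -- Statement 2
    intro t ht
    have key : ∑ m : Fin n, Kk a b z (t ⟨0, hk⟩) (vk a (Function.update t ⟨0, hk⟩ m)) = 0 := by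
      rw [Finset.sum_congr rfl fun m _ => Kk_vk a b z (t ⟨0, hk⟩) (Function.update t ⟨0, hk⟩ m)]
      rw [Finset.sum_comm]
      refine Finset.sum_eq_zero fun t' _ => ?_
      rw [← Finset.smul_sum, ← Finset.sum_smul, sum_det_Emat_update, zero_smul, smul_zero]
    have hsplit : (∑ m ∈ Finset.univ \ Finset.univ.image t,
          Kk a b z (t ⟨0, hk⟩) (vk a (Function.update t ⟨0, hk⟩ m)))
        + ∑ m ∈ Finset.univ.image t,
            Kk a b z (t ⟨0, hk⟩) (vk a (Function.update t ⟨0, hk⟩ m)) = 0 := by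
      rw [Finset.sum_sdiff (Finset.subset_univ _)]
      exact key
    have himg : ∑ m ∈ Finset.univ.image t,
        Kk a b z (t ⟨0, hk⟩) (vk a (Function.update t ⟨0, hk⟩ m))
        = Kk a b z (t ⟨0, hk⟩) (vk a t) := by
      rw [Finset.sum_image (fun x _ y _ hxy => ht hxy)]
      rw [Finset.sum_eq_single (⟨0, hk⟩ : Fin k)]
      · rw [Function.update_eq_self]
      · intro l _ hl
        have hnotinj : ¬Function.Injective (Function.update t ⟨0, hk⟩ (t l)) := by
          intro hinj
          have h1 : Function.update t ⟨0, hk⟩ (t l) ⟨0, hk⟩ = t l :=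
            Function.update_self _ _ _
          have h2 : Function.update t ⟨0, hk⟩ (t l) l = t l := by
            rw [Function.update_of_ne hl]
          exact hl (hinj (h2.trans h1.symm))
        have hzero : vk a (Function.update t ⟨0, hk⟩ (t l)) = 0 := by
          unfold vk
          rw [if_neg hnotinj]
        rw [hzero, map_zero]
      · intro h
        exact absurd (Finset.mem_univ _) h
    rw [himg] at hsplit
    exact eq_neg_of_add_eq_zero_left (by rw [add_comm]; exact hsplit)
end
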